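/- arXiv:2008.05625 — 5 statements merged into one kernel-verified Lean document; each statement's English description precedes it below -/
import Mathlib

section
/- If X_1 and X_2 are i.i.d. random variables with probability density f(x) = α x^{-α-1} for x ≥ 1 (α > 0), then P(X_1 X_2 > x) is asymptotically equivalent to α x^{-α} log x as x → ∞. -/
open MeasureTheory Filter Real Set

noncomputable def paretoMeasure (α : ℝ) : Measure ℝ :=
  MeasureTheory.volume.withDensity
    (fun x => ENNReal.ofReal (if 1 ≤ x then α * x ^ (-α - 1) else 0))

noncomputable def aSeq (α γ : ℝ) (n : ℕ) : ℝ := ((n : ℝ) ^ γ * Real.log n) ^ (1/α)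

lemma paretoDensity_measurable (α : ℝ) :
    Measurable (fun x : ℝ => ENNReal.ofReal (if 1 ≤ x then α * x ^ (-α - 1) else 0)) :=
  (Measurable.ite measurableSet_Ici ((measurable_id.pow_const _).const_mul _)
    measurable_const).ennreal_ofReal

lemma lint_tail {α : ℝ} (hα : 0 < α) {s : ℝ} (hs : 0 < s) :
    ∫⁻ t in Ioi s, ENNReal.ofReal (α * t ^ (-α - 1)) = ENNReal.ofReal (s ^ (-α)) := by
  rw [← ofReal_integral_eq_lintegral_ofReal]
  · rw [integral_const_mul, integral_Ioi_rpow_of_lt (by linarith) hs]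
    congr 1
    have : -α - 1 + 1 = -α := by ring
    rw [this]
    field_simp
  · exact (integrableOn_Ioi_rpow_of_lt (by linarith) hs).const_mul α
  · filter_upwards [ae_restrict_mem measurableSet_Ioi] with t ht
    have h0 : (0:ℝ) < t := lt_trans hs ht
    positivity

lemma pareto_tail {α : ℝ} (hα : 0 < α) {s : ℝ} (hs : 1 ≤ s) :
    paretoMeasure α (Ioi s) = ENNReal.ofReal (s ^ (-α)) := by
  rw [paretoMeasure, withDensity_apply _ measurableSet_Ioi]
  rw [setLIntegral_congr_fun measurableSet_Ioi
    (fun t (ht : s < t) => by rw [if_pos (le_of_lt (lt_of_le_of_lt hs ht))])]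
  exact lint_tail hα (lt_of_lt_of_le zero_lt_one hs)

lemma pareto_tail_small {α : ℝ} (hα : 0 < α) {s : ℝ} (hs : s ≤ 1) :
    paretoMeasure α (Ioi s) = 1 := by
  have h1 : Ioi s = Ioc s 1 ∪ Ioi 1 := (Ioc_union_Ioi_eq_Ioi hs).symm
  rw [paretoMeasure, withDensity_apply _ measurableSet_Ioi, h1,
    lintegral_union measurableSet_Ioi (Ioc_disjoint_Ioi le_rfl)]
  have hIoc : ∫⁻ t in Ioc s 1,
      ENNReal.ofReal (if 1 ≤ t then α * t ^ (-α - 1) else 0) = 0 := by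
    rw [← setLIntegral_congr (Ioo_ae_eq_Ioc (a := s) (b := 1))]
    rw [setLIntegral_congr_fun (g := fun _ => 0) measurableSet_Ioo
      (fun t ht => by rw [if_neg (not_le.2 ht.2)]; simp)]
    simp
  have hIoi : ∫⁻ t in Ioi (1:ℝ),
      ENNReal.ofReal (if 1 ≤ t then α * t ^ (-α - 1) else 0) = 1 := by
    rw [setLIntegral_congr_fun measurableSet_Ioi
      (fun t (ht : (1:ℝ) < t) => by rw [if_pos ht.le]), lint_tail hα zero_lt_one]
    simp
  rw [hIoc, hIoi, zero_add]

instance (α : ℝ) : SFinite (paretoMeasure α) := by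
  unfold paretoMeasure; infer_instance

lemma pareto_prod_eq {α : ℝ} (hα : 0 < α) {x : ℝ} (hx : 1 < x) :
    ((paretoMeasure α).prod (paretoMeasure α)) {p : ℝ × ℝ | p.1 * p.2 > x}
      = ENNReal.ofReal (α * x ^ (-α) * Real.log x + x ^ (-α)) := by
  have hx0 : (0:ℝ) < x := lt_trans zero_lt_one hx
  have hS : MeasurableSet {p : ℝ × ℝ | p.1 * p.2 > x} := by
    have : {p : ℝ × ℝ | p.1 * p.2 > x} = (fun p : ℝ × ℝ => p.1 * p.2) ⁻¹' Ioi x := rfl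
    rw [this]
    exact (measurable_fst.mul measurable_snd) measurableSet_Ioi
  rw [Measure.prod_apply hS]
  -- replace the outer measure by the density
  rw [show paretoMeasure α = MeasureTheory.volume.withDensity
      (fun x => ENNReal.ofReal (if 1 ≤ x then α * x ^ (-α - 1) else 0)) from rfl,
    lintegral_withDensity_eq_lintegral_mul_non_measurable _ (paretoDensity_measurable α)
      (ae_of_all _ (fun _ => ENNReal.ofReal_lt_top))]
  -- the integrand vanishes off Ici 1
  have hind : (fun t : ℝ => ENNReal.ofReal (if 1 ≤ t then α * t ^ (-α - 1) else 0) *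
        (MeasureTheory.volume.withDensity
          (fun x => ENNReal.ofReal (if 1 ≤ x then α * x ^ (-α - 1) else 0)))
          (Prod.mk t ⁻¹' {p : ℝ × ℝ | p.1 * p.2 > x}))
      = (Ici (1:ℝ)).indicator (fun t => ENNReal.ofReal (α * t ^ (-α - 1)) *
        (paretoMeasure α) {y : ℝ | t * y > x}) := by
    funext t
    simp only [indicator_apply, mem_Ici]
    by_cases ht : (1:ℝ) ≤ t
    · rw [if_pos ht, if_pos ht]; rfl
    · rw [if_neg ht, if_neg ht]; simp
  simp only [Pi.mul_apply]
  rw [hind]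
  have hli : lintegral volume ((Ici (1:ℝ)).indicator fun t =>
      ENNReal.ofReal (α * t ^ (-α - 1)) * (paretoMeasure α) {y : ℝ | t * y > x})
      = ∫⁻ t in Ici 1, ENNReal.ofReal (α * t ^ (-α - 1)) * (paretoMeasure α) {y : ℝ | t * y > x} :=
    lintegral_indicator measurableSet_Ici _
  rw [hli,
    ← setLIntegral_congr (Ioi_ae_eq_Ici (a := (1:ℝ)))]
  have hsplit : Ioi (1:ℝ) = Ioc 1 x ∪ Ioi x := (Ioc_union_Ioi_eq_Ioi hx.le).symm
  rw [hsplit, lintegral_union measurableSet_Ioi (Ioc_disjoint_Ioi le_rfl)]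
  have hmid : ∫⁻ t in Ioc 1 x, ENNReal.ofReal (α * t ^ (-α - 1)) *
      (paretoMeasure α) {y : ℝ | t * y > x}
      = ENNReal.ofReal (α * x ^ (-α) * Real.log x) := by
    rw [setLIntegral_congr_fun (g := fun t => ENNReal.ofReal ((α * x ^ (-α)) * t⁻¹))
        measurableSet_Ioc]
    · rw [← ofReal_integral_eq_lintegral_ofReal]
      · rw [integral_const_mul, ← intervalIntegral.integral_of_le hx.le,
          integral_inv (by rw [uIcc_of_le hx.le]; intro h; exact absurd h.1 (by norm_num)),
          div_one]
      · apply Integrable.const_mul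
        have : IntegrableOn (fun t : ℝ => t⁻¹) (Icc 1 x) volume := by
          apply ContinuousOn.integrableOn_Icc
          exact ContinuousOn.inv₀ continuousOn_id (fun t ht => by
            have : (0:ℝ) < t := lt_of_lt_of_le zero_lt_one ht.1
            exact ne_of_gt this)
        exact this.mono_set Ioc_subset_Icc_self
      · filter_upwards [ae_restrict_mem measurableSet_Ioc] with t ht
        have h0 : (0:ℝ) < t := lt_trans zero_lt_one ht.1
        positivity
    · intro t ht; dsimp only
      have ht0 : (0:ℝ) < t := lt_trans zero_lt_one ht.1
      have hsec : {y : ℝ | t * y > x} = Ioi (x / t) := by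
        ext y; simp only [mem_setOf_eq, mem_Ioi, gt_iff_lt]
        rw [div_lt_iff₀ ht0, mul_comm]
      have hdiv1 : (1:ℝ) ≤ x / t := (one_le_div ht0).2 ht.2
      rw [hsec, pareto_tail hα hdiv1, ← ENNReal.ofReal_mul (by positivity)]
      congr 1
      have ht' : t ^ (-α - 1) = t ^ (-α) * t⁻¹ := by
        rw [show -α - 1 = -α + (-1) by ring, Real.rpow_add ht0, Real.rpow_neg_one]
      have htne : t ^ (-α) ≠ 0 := by positivity
      rw [div_rpow hx0.le ht0.le, ht']
      field_simp
  have hright : ∫⁻ t in Ioi x, ENNReal.ofReal (α * t ^ (-α - 1)) *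
      (paretoMeasure α) {y : ℝ | t * y > x}
      = ENNReal.ofReal (x ^ (-α)) := by
    rw [setLIntegral_congr_fun (g := fun t => ENNReal.ofReal (α * t ^ (-α - 1)))
        measurableSet_Ioi]
    · exact lint_tail hα hx0
    · intro t ht; dsimp only
      have ht0 : (0:ℝ) < t := lt_trans hx0 ht
      have hsec : {y : ℝ | t * y > x} = Ioi (x / t) := by
        ext y; simp only [mem_setOf_eq, mem_Ioi, gt_iff_lt]
        rw [div_lt_iff₀ ht0, mul_comm]
      have : x / t ≤ 1 := le_of_lt ((div_lt_one ht0).2 ht)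
      rw [hsec, pareto_tail_small hα this, mul_one]
  have hlog : (0:ℝ) ≤ Real.log x := Real.log_nonneg hx.le
  rw [hmid, hright, ← ENNReal.ofReal_add (by positivity) (by positivity)]

theorem stmt0 (α : ℝ) (hα : 0 < α) :
    Tendsto (fun x : ℝ =>
      (((paretoMeasure α).prod (paretoMeasure α)) {p : ℝ × ℝ | p.1 * p.2 > x}).toReal
        / (α * x ^ (-α) * Real.log x)) atTop (nhds 1) := by
  have hlim : Tendsto (fun x : ℝ => 1 + (α * Real.log x)⁻¹) atTop (nhds 1) := by
    have h1 : Tendsto (fun x : ℝ => α * Real.log x) atTop atTop :=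
      tendsto_log_atTop.const_mul_atTop hα
    have h2 : Tendsto (fun x : ℝ => (α * Real.log x)⁻¹) atTop (nhds 0) :=
      h1.inv_tendsto_atTop
    simpa using tendsto_const_nhds.add h2
  refine hlim.congr' ?_
  filter_upwards [eventually_gt_atTop (1:ℝ)] with x hx
  have hx0 : (0:ℝ) < x := lt_trans zero_lt_one hx
  have hlog : 0 < Real.log x := Real.log_pos hx
  have hxa : (0:ℝ) < x ^ (-α) := Real.rpow_pos_of_pos hx0 _
  rw [pareto_prod_eq hα hx, ENNReal.toReal_ofReal (by positivity)]
  field_simp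
end

section
/- If X_1, X_2, X_3 are i.i.d. with density α x^{-α-1}·1{x ≥ 1} (α > 0), then P(X_1 X_2 > x, X_1 X_3 > x) is asymptotically equivalent to C x^{-α} as x → ∞ for some constant C > 0; in particular the conditional probability P(X_1 X_3 > x | X_1 X_2 > x) tends to 0 at rate 1/log x. -/
open MeasureTheory Filter Real Set

namespace PA

noncomputable def dens (α : ℝ) (y : ℝ) : ℝ := if 1 ≤ y then α * y ^ (-α - 1) else 0

lemma measurable_dens (α : ℝ) : Measurable (dens α) :=
  Measurable.ite measurableSet_Ici ((measurable_id.pow_const _).const_mul _) measurable_const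

lemma dens_nonneg {α : ℝ} (hα : 0 < α) (y : ℝ) : 0 ≤ dens α y := by
  unfold dens; split_ifs with h
  · have : (0:ℝ) < y := by linarith
    positivity
  · exact le_rfl

lemma pareto_eq (α : ℝ) :
    paretoMeasure α = MeasureTheory.volume.withDensity (fun y => ENNReal.ofReal (dens α y)) := rfl

lemma integrable_dens {α : ℝ} (hα : 0 < α) : Integrable (dens α) := by
  have h1 : dens α = (Ici (1:ℝ)).indicator (fun y => α * y ^ (-α - 1)) := by
    funext y; by_cases h : 1 ≤ y <;> simp [dens, indicator, h]
  rw [h1, integrable_indicator_iff measurableSet_Ici]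
  rw [integrableOn_Ici_iff_integrableOn_Ioi]
  exact (integrableOn_Ioi_rpow_of_lt (by linarith) one_pos).const_mul α

lemma tail {α : ℝ} (hα : 0 < α) (t : ℝ) :
    paretoMeasure α (Ioi t) = ENNReal.ofReal ((max t 1) ^ (-α)) := by
  set c := max t 1 with hc
  have hc1 : (1:ℝ) ≤ c := le_max_right _ _
  have hc0 : (0:ℝ) < c := lt_of_lt_of_le one_pos hc1
  rw [pareto_eq, withDensity_apply _ measurableSet_Ioi]
  have hind : ∀ y, ENNReal.ofReal (dens α y)
      = (Ici (1:ℝ)).indicator (fun y => ENNReal.ofReal (α * y ^ (-α - 1))) y := by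
    intro y; by_cases h : 1 ≤ y <;> simp [dens, indicator, h]
  rw [lintegral_congr hind, lintegral_indicator measurableSet_Ici _,
    Measure.restrict_restrict measurableSet_Ici]
  have hset : (Ici 1 ∩ Ioi t : Set ℝ) =ᵐ[volume] (Ioi c : Set ℝ) := by
    rw [MeasureTheory.ae_eq_set]
    constructor
    · refine measure_mono_null (fun y hy => ?_) (Real.volume_singleton (a := c))
      rcases hy with ⟨⟨hy1, hyt⟩, hyc⟩
      simp only [mem_Ioi, not_lt] at hyc
      have hcy : c ≤ y := max_le hyt.le hy1
      simp [le_antisymm hyc hcy]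
    · refine measure_mono_null (fun y hy => ?_) (Real.volume_singleton (a := c))
      rcases hy with ⟨hy, hy2⟩
      exact absurd ⟨hc1.trans hy.le, lt_of_le_of_lt (le_max_left t 1) hy⟩ hy2
  rw [Measure.restrict_congr_set hset]
  rw [← ofReal_integral_eq_lintegral_ofReal]
  · congr 1
    rw [integral_const_mul, integral_Ioi_rpow_of_lt (by linarith) hc0]
    have : -α - 1 + 1 = -α := by ring
    rw [this]
    field_simp
  · exact (integrableOn_Ioi_rpow_of_lt (by linarith) hc0).const_mul α
  · refine (ae_restrict_iff' measurableSet_Ioi).mpr (ae_of_all _ fun y hy => ?_)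
    have : (0:ℝ) < y := lt_trans hc0 hy
    positivity

end PA

namespace PA

noncomputable def T (α x y : ℝ) : ℝ := (max (x/y) 1) ^ (-α)

lemma T_nonneg (α x y : ℝ) : 0 ≤ T α x y :=
  rpow_nonneg (le_trans zero_le_one (le_max_right _ _)) _

lemma T_le_one {α : ℝ} (hα : 0 < α) (x y : ℝ) : T α x y ≤ 1 :=
  rpow_le_one_of_one_le_of_nonpos (le_max_right _ _) (by linarith)

lemma measurable_T (α x : ℝ) : Measurable (T α x) :=
  ((measurable_const.div measurable_id).max measurable_const).pow_const _

lemma meas_set {x y : ℝ} (hy : 0 < y) : {z : ℝ | y * z > x} = Ioi (x / y) := by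
  ext z; simp [gt_iff_lt, div_lt_iff₀ hy, mul_comm]

lemma nu_set {α : ℝ} (hα : 0 < α) {x y : ℝ} (hy : 0 < y) :
    paretoMeasure α {z : ℝ | y * z > x} = ENNReal.ofReal (T α x y) := by
  rw [meas_set hy, tail hα]; rfl

lemma integrable_dT {α : ℝ} (hα : 0 < α) (x : ℝ) (k : ℕ) :
    Integrable (fun y => dens α y * (T α x y) ^ k) := by
  refine (integrable_dens hα).mono ?_ ?_
  · exact ((measurable_dens α).mul ((measurable_T α x).pow_const k)).aestronglyMeasurable
  · refine ae_of_all _ fun y => ?_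
    have h1 := dens_nonneg hα y
    have h2 : (0:ℝ) ≤ (T α x y) ^ k := pow_nonneg (T_nonneg α x y) k
    have h3 : (T α x y) ^ k ≤ 1 := pow_le_one₀ (T_nonneg α x y) (T_le_one hα x y)
    rw [Real.norm_eq_abs, Real.norm_eq_abs, abs_of_nonneg (mul_nonneg h1 h2), abs_of_nonneg h1]
    nlinarith

lemma lint_eq {α : ℝ} (hα : 0 < α) (x : ℝ) (k : ℕ) :
    ∫⁻ y, ENNReal.ofReal (dens α y) * (ENNReal.ofReal (T α x y)) ^ k ∂volume
      = ENNReal.ofReal (∫ y in Ioi 1, α * y ^ (-α - 1) * (T α x y) ^ k) := by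
  have hpt : ∀ y, ENNReal.ofReal (dens α y) * (ENNReal.ofReal (T α x y)) ^ k
      = ENNReal.ofReal (dens α y * (T α x y) ^ k) := fun y => by
    rw [← ENNReal.ofReal_pow (T_nonneg α x y), ← ENNReal.ofReal_mul (dens_nonneg hα y)]
  rw [lintegral_congr hpt,
    ← ofReal_integral_eq_lintegral_ofReal (integrable_dT hα x k)
      (ae_of_all _ fun y => mul_nonneg (dens_nonneg hα y) (pow_nonneg (T_nonneg α x y) k))]
  congr 1
  have hf : (fun y => dens α y * (T α x y) ^ k)
      = (Ici (1:ℝ)).indicator (fun y => α * y ^ (-α - 1) * (T α x y) ^ k) := by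
    funext y; by_cases h : 1 ≤ y <;> simp [dens, indicator, h]
  rw [hf, integral_indicator measurableSet_Ici, integral_Ici_eq_integral_Ioi]

end PA

namespace PA

lemma comp_Ioi {α : ℝ} (hα : 0 < α) {x : ℝ} (hx : 1 ≤ x) (k : ℕ) :
    ∫ y in Ioi x, α * y ^ (-α - 1) * (T α x y) ^ k = x ^ (-α) := by
  have hx0 : (0:ℝ) < x := by linarith
  have hcong : ∫ y in Ioi x, α * y ^ (-α - 1) * (T α x y) ^ k
      = ∫ y in Ioi x, α * y ^ (-α - 1) := by
    refine setIntegral_congr_fun measurableSet_Ioi fun y hy => ?_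
    have hyx : x / y < 1 := (div_lt_one (lt_trans hx0 hy)).mpr hy
    simp [T, max_eq_right hyx.le, Real.one_rpow]
  rw [hcong, integral_const_mul, integral_Ioi_rpow_of_lt (by linarith) hx0,
    show -α - 1 + 1 = -α by ring]
  field_simp

lemma T_Ioc {α x y : ℝ} (hx0 : 0 < x) (hy : y ∈ Ioc 1 x) : T α x y = x ^ (-α) * y ^ α := by
  have hy0 : (0:ℝ) < y := lt_trans one_pos hy.1
  have hxy : (1:ℝ) ≤ x / y := (one_le_div hy0).mpr hy.2
  rw [T, max_eq_left hxy, Real.div_rpow hx0.le hy0.le, div_eq_mul_inv,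
    ← Real.rpow_neg hy0.le, neg_neg]

lemma comp_Ioc1 {α : ℝ} (hα : 0 < α) {x : ℝ} (hx : 1 ≤ x) :
    ∫ y in Ioc 1 x, α * y ^ (-α - 1) * (T α x y) ^ 1 = α * x ^ (-α) * Real.log x := by
  have hx0 : (0:ℝ) < x := by linarith
  have hcong : ∫ y in Ioc 1 x, α * y ^ (-α - 1) * (T α x y) ^ 1
      = ∫ y in Ioc 1 x, (α * x ^ (-α)) * y⁻¹ := by
    refine setIntegral_congr_fun measurableSet_Ioc fun y hy => ?_
    have hy0 : (0:ℝ) < y := lt_trans one_pos hy.1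
    have e2 : y ^ (-α - 1) * y ^ α = y⁻¹ := by
      rw [← Real.rpow_add hy0, show -α - 1 + α = -1 by ring, Real.rpow_neg_one]
    rw [pow_one, T_Ioc hx0 hy]
    linear_combination α * x ^ (-α) * e2
  rw [hcong, integral_const_mul, ← intervalIntegral.integral_of_le hx,
    integral_inv (by rw [uIcc_of_le hx]; rintro ⟨h0, -⟩; linarith), div_one]

lemma comp_Ioc2 {α : ℝ} (hα : 0 < α) {x : ℝ} (hx : 1 ≤ x) :
    ∫ y in Ioc 1 x, α * y ^ (-α - 1) * (T α x y) ^ 2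
      = x ^ (-α) - (x ^ (-α)) ^ 2 := by
  have hx0 : (0:ℝ) < x := by linarith
  have hkey : x ^ (-α) * x ^ α = 1 := by
    rw [← Real.rpow_add hx0]; simp
  have hcong : ∫ y in Ioc 1 x, α * y ^ (-α - 1) * (T α x y) ^ 2
      = ∫ y in Ioc 1 x, (α * (x ^ (-α)) ^ 2) * y ^ (α - 1) := by
    refine setIntegral_congr_fun measurableSet_Ioc fun y hy => ?_
    have hy0 : (0:ℝ) < y := lt_trans one_pos hy.1
    have e3 : y ^ (-α - 1) * (y ^ α * y ^ α) = y ^ (α - 1) := by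
      rw [← Real.rpow_add hy0, ← Real.rpow_add hy0, show -α - 1 + (α + α) = α - 1 by ring]
    rw [T_Ioc hx0 hy]
    linear_combination α * (x ^ (-α)) ^ 2 * e3
  rw [hcong, integral_const_mul, ← intervalIntegral.integral_of_le hx,
    integral_rpow (Or.inl (by linarith)), show α - 1 + 1 = α by ring, Real.one_rpow]
  field_simp
  linear_combination hkey

lemma intOn {α : ℝ} (hα : 0 < α) (x : ℝ) (k : ℕ) {s : Set ℝ} (hs : s ⊆ Ici 1)
    (hms : MeasurableSet s) :
    IntegrableOn (fun y => α * y ^ (-α - 1) * (T α x y) ^ k) s volume := by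
  refine ((integrable_dT hα x k).integrableOn).congr_fun (fun y hy => ?_) hms
  have h1 : (1:ℝ) ≤ y := hs hy
  simp [dens, h1]

lemma int1 {α : ℝ} (hα : 0 < α) {x : ℝ} (hx : 1 ≤ x) :
    ∫ y in Ioi 1, α * y ^ (-α - 1) * (T α x y) ^ 1 = x ^ (-α) * (1 + α * Real.log x) := by
  rw [← Ioc_union_Ioi_eq_Ioi hx,
    setIntegral_union Ioc_disjoint_Ioi_same measurableSet_Ioi
      (intOn hα x 1 (fun y hy => hy.1.le) measurableSet_Ioc)
      (intOn hα x 1 (fun y hy => le_trans hx (le_of_lt hy)) measurableSet_Ioi),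
    comp_Ioc1 hα hx, comp_Ioi hα hx 1]
  ring

lemma int2 {α : ℝ} (hα : 0 < α) {x : ℝ} (hx : 1 ≤ x) :
    ∫ y in Ioi 1, α * y ^ (-α - 1) * (T α x y) ^ 2 = x ^ (-α) * (2 - x ^ (-α)) := by
  rw [← Ioc_union_Ioi_eq_Ioi hx,
    setIntegral_union Ioc_disjoint_Ioi_same measurableSet_Ioi
      (intOn hα x 2 (fun y hy => hy.1.le) measurableSet_Ioc)
      (intOn hα x 2 (fun y hy => le_trans hx (le_of_lt hy)) measurableSet_Ioi),
    comp_Ioc2 hα hx, comp_Ioi hα hx 2]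
  ring

end PA

namespace PA

instance (α : ℝ) : SFinite (paretoMeasure α) := by
  unfold paretoMeasure; infer_instance

lemma lint_dens {α : ℝ} (g : ℝ → ENNReal) (hg : Measurable g) :
    ∫⁻ y, g y ∂(paretoMeasure α) = ∫⁻ y, ENNReal.ofReal (dens α y) * g y ∂volume := by
  rw [pareto_eq, lintegral_withDensity_eq_lintegral_mul volume
    ((measurable_dens α).ennreal_ofReal) hg]
  rfl

lemma pair_meas {α : ℝ} (hα : 0 < α) {x : ℝ} (hx : 1 ≤ x) :
    ((paretoMeasure α).prod (paretoMeasure α)) {p : ℝ × ℝ | p.1 * p.2 > x}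
      = ENNReal.ofReal (x ^ (-α) * (1 + α * Real.log x)) := by
  have hs : MeasurableSet {p : ℝ × ℝ | p.1 * p.2 > x} :=
    measurableSet_lt measurable_const (measurable_fst.mul measurable_snd)
  rw [Measure.prod_apply hs, lint_dens _ (measurable_measure_prodMk_left hs)]
  have hpt : ∀ y, ENNReal.ofReal (dens α y)
        * paretoMeasure α (Prod.mk y ⁻¹' {p : ℝ × ℝ | p.1 * p.2 > x})
      = ENNReal.ofReal (dens α y) * (ENNReal.ofReal (T α x y)) ^ 1 := by
    intro y
    by_cases h : 1 ≤ y
    · rw [pow_one]; congr 1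
      exact nu_set hα (lt_of_lt_of_le one_pos h)
    · have hd : dens α y = 0 := by simp [dens, h]
      rw [hd]; simp
  rw [lintegral_congr hpt, lint_eq hα x 1, int1 hα hx]

lemma trip_meas {α : ℝ} (hα : 0 < α) {x : ℝ} (hx : 1 ≤ x) :
    ((paretoMeasure α).prod ((paretoMeasure α).prod (paretoMeasure α)))
        {p : ℝ × ℝ × ℝ | p.1 * p.2.1 > x ∧ p.1 * p.2.2 > x}
      = ENNReal.ofReal (x ^ (-α) * (2 - x ^ (-α))) := by
  have hm1 : Measurable fun p : ℝ × ℝ × ℝ => p.1 * p.2.1 :=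
    measurable_fst.mul (measurable_fst.comp measurable_snd)
  have hm2 : Measurable fun p : ℝ × ℝ × ℝ => p.1 * p.2.2 :=
    measurable_fst.mul (measurable_snd.comp measurable_snd)
  have hs : MeasurableSet {p : ℝ × ℝ × ℝ | p.1 * p.2.1 > x ∧ p.1 * p.2.2 > x} :=
    (measurableSet_lt measurable_const hm1).inter (measurableSet_lt measurable_const hm2)
  rw [Measure.prod_apply hs, lint_dens _ (measurable_measure_prodMk_left hs)]
  have hpt : ∀ y, ENNReal.ofReal (dens α y)
        * ((paretoMeasure α).prod (paretoMeasure α))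
          (Prod.mk y ⁻¹' {p : ℝ × ℝ × ℝ | p.1 * p.2.1 > x ∧ p.1 * p.2.2 > x})
      = ENNReal.ofReal (dens α y) * (ENNReal.ofReal (T α x y)) ^ 2 := by
    intro y
    by_cases h : 1 ≤ y
    · have hpre : (Prod.mk y ⁻¹' {p : ℝ × ℝ × ℝ | p.1 * p.2.1 > x ∧ p.1 * p.2.2 > x})
          = {z : ℝ | y * z > x} ×ˢ {z : ℝ | y * z > x} := rfl
      rw [hpre, Measure.prod_prod, nu_set hα (lt_of_lt_of_le one_pos h), pow_two]
    · have hd : dens α y = 0 := by simp [dens, h]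
      rw [hd]; simp
  rw [lintegral_congr hpt, lint_eq hα x 2, int2 hα hx]

end PA

open PA

theorem stmt1 (α : ℝ) (hα : 0 < α) :
    ∃ C > (0 : ℝ),
      Tendsto (fun x : ℝ =>
        (((paretoMeasure α).prod ((paretoMeasure α).prod (paretoMeasure α)))
          {p : ℝ × ℝ × ℝ | p.1 * p.2.1 > x ∧ p.1 * p.2.2 > x}).toReal / (C * x ^ (-α)))
        atTop (nhds 1) ∧
      Tendsto (fun x : ℝ =>
        (((paretoMeasure α).prod ((paretoMeasure α).prod (paretoMeasure α)))
          {p : ℝ × ℝ × ℝ | p.1 * p.2.1 > x ∧ p.1 * p.2.2 > x}).toReal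
          / (((paretoMeasure α).prod (paretoMeasure α)) {p : ℝ × ℝ | p.1 * p.2 > x}).toReal
          * Real.log x) atTop (nhds (C / α)) := by
  have h0 : Tendsto (fun x : ℝ => x ^ (-α)) atTop (nhds 0) := tendsto_rpow_neg_atTop hα
  have htrip : ∀ x : ℝ, 1 ≤ x →
      (((paretoMeasure α).prod ((paretoMeasure α).prod (paretoMeasure α)))
        {p : ℝ × ℝ × ℝ | p.1 * p.2.1 > x ∧ p.1 * p.2.2 > x}).toReal
      = x ^ (-α) * (2 - x ^ (-α)) := by
    intro x hx
    rw [trip_meas hα hx, ENNReal.toReal_ofReal]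
    have h1 : x ^ (-α) ≤ 1 := rpow_le_one_of_one_le_of_nonpos hx (by linarith)
    have h2 : (0:ℝ) ≤ x ^ (-α) := rpow_nonneg (by linarith) _
    nlinarith
  have hpairv : ∀ x : ℝ, 1 ≤ x →
      (((paretoMeasure α).prod (paretoMeasure α)) {p : ℝ × ℝ | p.1 * p.2 > x}).toReal
      = x ^ (-α) * (1 + α * Real.log x) := by
    intro x hx
    rw [pair_meas hα hx, ENNReal.toReal_ofReal]
    have h2 : (0:ℝ) ≤ x ^ (-α) := rpow_nonneg (by linarith) _
    have h3 : 0 ≤ Real.log x := log_nonneg hx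
    positivity
  refine ⟨2, two_pos, ?_, ?_⟩
  · apply Tendsto.congr' (f₁ := fun x : ℝ => 1 - x ^ (-α) / 2)
    · filter_upwards [eventually_ge_atTop (1:ℝ)] with x hx
      rw [htrip x hx]
      have ha : (0:ℝ) < x ^ (-α) := rpow_pos_of_pos (by linarith) _
      field_simp
    · simpa using tendsto_const_nhds.sub (h0.div_const 2)
  · apply Tendsto.congr'
      (f₁ := fun x : ℝ => (2 - x ^ (-α)) / ((Real.log x)⁻¹ + α))
    · filter_upwards [eventually_ge_atTop (2:ℝ)] with x hx2
      have hx : (1:ℝ) ≤ x := by linarith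
      rw [htrip x hx, hpairv x hx]
      have ha : (0:ℝ) < x ^ (-α) := rpow_pos_of_pos (by linarith) _
      have hL : 0 < Real.log x := log_pos (by linarith)
      have h1 : (0:ℝ) < 1 + α * Real.log x := by positivity
      field_simp
    · have hnum : Tendsto (fun x : ℝ => 2 - x ^ (-α)) atTop (nhds 2) := by
        simpa using tendsto_const_nhds.sub h0
      have hden : Tendsto (fun x : ℝ => (Real.log x)⁻¹ + α) atTop (nhds α) := by
        simpa using (tendsto_inv_atTop_zero.comp tendsto_log_atTop).add
          (tendsto_const_nhds (x := α))
      exact hnum.div hden (ne_of_gt hα)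
end

section
/- Let X_1,...,X_n be i.i.d. with density α x^{-α-1}·1{x ≥ 1}, and a_n^α = n^γ log n with γ ∈ (1,2]. Then the expected number of non-isolated vertices n·P(max_{2≤i≤n} X_1 X_i > a_n) is asymptotically (γ-1) n^{2-γ} as n → ∞ (for γ = 2 interpreted as (γ-1)n^{2-γ} = 1). -/
set_option linter.unusedSectionVars false
open MeasureTheory Filter Real Set

namespace Stmt3Aux

lemma pow_one_sub_le {t : ℝ} (ht0 : 0 ≤ t) (ht1 : t ≤ 1) (m : ℕ) :
    (1 - t) ^ m ≤ 1 - m * t + (m : ℝ)^2 / 2 * t^2 := by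
  induction m with
  | zero => simp
  | succ m ih =>
      have h1 : (0:ℝ) ≤ 1 - t := by linarith
      have := mul_le_mul_of_nonneg_right ih h1
      calc (1 - t) ^ (m+1) = (1-t)^m * (1-t) := by ring
        _ ≤ (1 - m*t + (m:ℝ)^2/2*t^2) * (1-t) := this
        _ ≤ 1 - (m+1:ℕ) * t + ((m+1:ℕ):ℝ)^2/2*t^2 := by
            push_cast; nlinarith [sq_nonneg t, mul_nonneg (mul_nonneg (sq_nonneg (m:ℝ)) ht0) ht0]

lemma bernoulli_pow {t : ℝ} (ht1 : t ≤ 1) (m : ℕ) : 1 - (m:ℝ) * t ≤ (1 - t) ^ m := by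
  have := one_add_mul_le_pow (a := -t) (by linarith) m
  simpa [sub_eq_add_neg, mul_comm] using this

variable {α : ℝ} (hα : 0 < α)

lemma paretoDensity_meas : Measurable (fun x : ℝ => ENNReal.ofReal (if 1 ≤ x then α * x ^ (-α - 1) else 0)) := by
  apply Measurable.ennreal_ofReal
  apply Measurable.ite measurableSet_Ici _ measurable_const; fun_prop

include hα

lemma pareto_Ioi {t : ℝ} (ht : 1 ≤ t) : paretoMeasure α (Ioi t) = ENNReal.ofReal (t ^ (-α)) := by
  have ht0 : (0:ℝ) < t := lt_of_lt_of_le one_pos ht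
  rw [paretoMeasure, withDensity_apply _ measurableSet_Ioi]
  have h1 : ∫⁻ x in Ioi t, ENNReal.ofReal (if 1 ≤ x then α * x ^ (-α - 1) else 0)
      = ∫⁻ x in Ioi t, ENNReal.ofReal (α * x ^ (-α - 1)) := by
    apply setLIntegral_congr_fun measurableSet_Ioi
    intro x hx
    beta_reduce
    rw [if_pos (le_trans ht (le_of_lt hx))]
  rw [h1]
  have hint : IntegrableOn (fun x : ℝ => α * x ^ (-α - 1)) (Ioi t) := by
    exact (integrableOn_Ioi_rpow_of_lt (by linarith) ht0).const_mul α
  rw [← ofReal_integral_eq_lintegral_ofReal hint]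
  · congr 1
    rw [integral_const_mul, integral_Ioi_rpow_of_lt (by linarith) ht0]
    have : -α - 1 + 1 = -α := by ring
    rw [this]
    field_simp
  · filter_upwards [ae_restrict_mem measurableSet_Ioi] with x hx
    have : (0:ℝ) < x := lt_trans ht0 hx
    positivity


omit hα in
lemma pareto_ac : paretoMeasure α ≪ volume :=
  withDensity_absolutelyContinuous _ _

omit hα in
lemma pareto_Iio_one : paretoMeasure α (Iio 1) = 0 := by
  rw [paretoMeasure, withDensity_apply _ measurableSet_Iio]
  have : ∫⁻ x in Iio (1:ℝ), ENNReal.ofReal (if 1 ≤ x then α * x ^ (-α - 1) else 0)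
      = ∫⁻ x in Iio (1:ℝ), 0 := by
    apply setLIntegral_congr_fun measurableSet_Iio
    intro x (hx : x < 1)
    beta_reduce
    rw [if_neg (not_le.mpr hx)]
    simp
  rw [this, lintegral_zero]

lemma pareto_univ : paretoMeasure α univ = 1 := by
  have h1 : paretoMeasure α (Ici 1) = paretoMeasure α (Ioi 1) :=
    (measure_congr (MeasureTheory.Ioi_ae_eq_Ici' (pareto_ac (Real.volume_singleton)))).symm
  have : (univ : Set ℝ) = Iio 1 ∪ Ici 1 := (Iio_union_Ici).symm
  rw [this, measure_union (Iio_disjoint_Ici le_rfl) measurableSet_Ici, pareto_Iio_one,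
    h1, pareto_Ioi hα le_rfl]
  simp [Real.one_rpow]

lemma pareto_prob : IsProbabilityMeasure (paretoMeasure α) := ⟨pareto_univ hα⟩

lemma pareto_Iic {s : ℝ} (hs : 1 ≤ s) :
    paretoMeasure α (Iic s) = ENNReal.ofReal (1 - s ^ (-α)) := by
  haveI := pareto_prob hα
  have : (Iic s) = (Ioi s)ᶜ := by simp
  rw [this, prob_compl_eq_one_sub measurableSet_Ioi, pareto_Ioi hα hs,
    ← ENNReal.ofReal_one, ← ENNReal.ofReal_sub _ (rpow_nonneg (by linarith) _)]

omit hα in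
lemma pareto_Iic_zero {s : ℝ} (hs : s < 1) : paretoMeasure α (Iic s) = 0 :=
  measure_mono_null (Iic_subset_Iio.mpr hs) pareto_Iio_one

lemma pareto_Iic_max {a x : ℝ} (ha : 1 ≤ a) (hx : 1 ≤ x) :
    paretoMeasure α (Iic (a / x)) = ENNReal.ofReal (max (1 - (x / a) ^ α) 0) := by
  have hx0 : (0:ℝ) < x := lt_of_lt_of_le one_pos hx
  have ha0 : (0:ℝ) < a := lt_of_lt_of_le one_pos ha
  rcases le_or_gt x a with h | h
  · have h1 : 1 ≤ a / x := (one_le_div hx0).mpr h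
    rw [pareto_Iic hα h1]
    congr 1
    have h2 : (a / x) ^ (-α) = (x / a) ^ α := by
      rw [Real.rpow_neg (by positivity), ← Real.inv_rpow (by positivity), inv_div]
    rw [h2, max_eq_left]
    have : (x / a) ^ α ≤ 1 := Real.rpow_le_one (by positivity) (by
      rw [div_le_one ha0]; exact h) (le_of_lt hα)
    linarith
  · have h1 : a / x < 1 := (div_lt_one hx0).mpr h
    rw [pareto_Iic_zero h1]
    have : 1 ≤ (x / a) ^ α := Real.one_le_rpow (by rw [le_div_iff₀ ha0]; linarith) (le_of_lt hα)
    rw [max_eq_right (by linarith)]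
    simp


lemma pareto_ae_one_le : ∀ᵐ x ∂(paretoMeasure α), 1 ≤ x := by
  rw [ae_iff]
  have : {x : ℝ | ¬ 1 ≤ x} = Iio 1 := by ext x; simp
  rw [this]
  exact pareto_Iio_one

lemma prob_lintegral {a : ℝ} (ha : 1 ≤ a) (m : ℕ) :
    ((paretoMeasure α).prod (Measure.pi fun _ : Fin m => paretoMeasure α))
      {p : ℝ × (Fin m → ℝ) | ∃ i, p.1 * p.2 i > a}
    = ∫⁻ x, ENNReal.ofReal (1 - (max (1 - (x/a)^α) 0) ^ m) ∂(paretoMeasure α) := by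
  haveI := pareto_prob hα
  haveI : IsProbabilityMeasure (Measure.pi fun _ : Fin m => paretoMeasure α) :=
    inferInstance
  have hT : MeasurableSet {p : ℝ × (Fin m → ℝ) | ∃ i, p.1 * p.2 i > a} := by
    have : {p : ℝ × (Fin m → ℝ) | ∃ i, p.1 * p.2 i > a}
        = ⋃ i, {p : ℝ × (Fin m → ℝ) | a < p.1 * p.2 i} := by
      ext p; simp [gt_iff_lt]
    rw [this]
    exact MeasurableSet.iUnion fun i => measurableSet_lt measurable_const
      (measurable_fst.mul ((measurable_pi_apply i).comp measurable_snd))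
  rw [Measure.prod_apply hT]
  apply lintegral_congr_ae
  filter_upwards [pareto_ae_one_le hα] with x hx
  have hx0 : (0:ℝ) < x := lt_of_lt_of_le one_pos hx
  have hsec : (Prod.mk x ⁻¹' {p : ℝ × (Fin m → ℝ) | ∃ i, p.1 * p.2 i > a})
      = (univ.pi fun _ : Fin m => Iic (a / x))ᶜ := by
    ext y
    simp only [mem_preimage, mem_setOf_eq, mem_compl_iff, Set.mem_pi, mem_univ, mem_Iic,
      forall_const, not_forall, not_le, gt_iff_lt, true_implies]
    constructor
    · rintro ⟨i, hi⟩; exact ⟨i, by rw [div_lt_iff₀ hx0]; linarith [mul_comm x (y i)]⟩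
    · rintro ⟨i, hi⟩; exact ⟨i, by rw [div_lt_iff₀ hx0] at hi; linarith [mul_comm (y i) x]⟩
  rw [hsec, prob_compl_eq_one_sub (MeasurableSet.univ_pi fun _ => measurableSet_Iic),
    Measure.pi_pi, pareto_Iic_max hα ha hx, Finset.prod_const, Finset.card_univ,
    Fintype.card_fin]
  have hF0 : (0:ℝ) ≤ max (1 - (x/a)^α) 0 := le_max_right _ _
  rw [ENNReal.ofReal_sub _ (pow_nonneg hF0 m), ENNReal.ofReal_pow hF0, ENNReal.ofReal_one]


omit hα in
lemma g_meas {a : ℝ} (m : ℕ) :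
    Measurable (fun x : ℝ => 1 - (max (1 - (x/a)^α) 0) ^ m) := by fun_prop

omit hα in
lemma g_nonneg {a x : ℝ} (ha : 0 < a) (hx : 0 < x) (m : ℕ) :
    0 ≤ 1 - (max (1 - (x/a)^α) 0) ^ m := by
  have h1 : max (1 - (x/a)^α) 0 ≤ 1 := by
    have : (0:ℝ) ≤ (x/a)^α := Real.rpow_nonneg (by positivity) _
    apply max_le (by linarith) zero_le_one
  have h0 : (0:ℝ) ≤ max (1 - (x/a)^α) 0 := le_max_right _ _
  have := pow_le_one₀ h0 h1 (n := m)
  linarith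

omit hα in
lemma g_le_one {a x : ℝ} (m : ℕ) :
    1 - (max (1 - (x/a)^α) 0) ^ m ≤ 1 := by
  have h0 : (0:ℝ) ≤ max (1 - (x/a)^α) 0 := le_max_right _ _
  have := pow_nonneg h0 m
  linarith

lemma prob_integral {a : ℝ} (ha : 1 ≤ a) (m : ℕ) :
    (((paretoMeasure α).prod (Measure.pi fun _ : Fin m => paretoMeasure α))
      {p : ℝ × (Fin m → ℝ) | ∃ i, p.1 * p.2 i > a}).toReal
    = ∫ x in Ioi 1, (α * x ^ (-α-1)) * (1 - (max (1 - (x/a)^α) 0) ^ m) := by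
  have ha0 : (0:ℝ) < a := lt_of_lt_of_le one_pos ha
  rw [prob_lintegral hα ha m, paretoMeasure,
    lintegral_withDensity_eq_lintegral_mul _ paretoDensity_meas
      ((g_meas (a := a) m).ennreal_ofReal)]
  have key : ∀ x : ℝ, ((fun x => ENNReal.ofReal (if 1 ≤ x then α * x ^ (-α - 1) else 0)) *
        (fun x => ENNReal.ofReal (1 - (max (1 - (x/a)^α) 0) ^ m))) x
      = ENNReal.ofReal ((if 1 ≤ x then α * x ^ (-α - 1) else 0) *
          (1 - (max (1 - (x/a)^α) 0) ^ m)) := by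
    intro x
    rw [Pi.mul_apply, ← ENNReal.ofReal_mul]
    split_ifs with h
    · have : (0:ℝ) < x := lt_of_lt_of_le one_pos h
      positivity
    · simp
  rw [lintegral_congr key]
  rw [← integral_eq_lintegral_of_nonneg_ae]
  · have heq : ∀ x : ℝ, (if 1 ≤ x then α * x ^ (-α - 1) else 0) *
        (1 - (max (1 - (x/a)^α) 0) ^ m)
        = (Ici (1:ℝ)).indicator
            (fun x => (α * x ^ (-α-1)) * (1 - (max (1 - (x/a)^α) 0) ^ m)) x := by
      intro x
      rw [indicator_apply]
      by_cases h : 1 ≤ x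
      · rw [if_pos h, if_pos (mem_Ici.mpr h)]
      · rw [if_neg h, if_neg (by simpa using h), zero_mul]
    simp_rw [heq]
    rw [MeasureTheory.integral_indicator measurableSet_Ici,
      MeasureTheory.integral_Ici_eq_integral_Ioi]
  · filter_upwards with x
    by_cases h : 1 ≤ x
    · rw [if_pos h]
      have hx0 : (0:ℝ) < x := lt_of_lt_of_le one_pos h
      have h1 : (0:ℝ) ≤ α * x ^ (-α - 1) := by positivity
      exact mul_nonneg h1 (g_nonneg ha0 hx0 m)
    · rw [if_neg h, zero_mul]; exact le_refl 0
  · apply Measurable.aestronglyMeasurable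
    apply Measurable.mul _ (g_meas m)
    apply Measurable.ite measurableSet_Ici _ measurable_const
    fun_prop


-- elementary integral evaluations
lemma int_E4 {a : ℝ} (ha : 0 < a) : ∫ x in Ioi a, α * x ^ (-α-1) = a ^ (-α) := by
  rw [integral_const_mul, integral_Ioi_rpow_of_lt (by linarith) ha]
  have : -α - 1 + 1 = -α := by ring
  rw [this]; field_simp

lemma int_E3 {c a : ℝ} (hc : 0 < c) (hca : c ≤ a) :
    ∫ x in Ioc c a, α * x ^ (-α-1) = c ^ (-α) - a ^ (-α) := by
  rw [← intervalIntegral.integral_of_le hca, intervalIntegral.integral_const_mul,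
    integral_rpow (Or.inr ⟨by intro h; linarith, by
      rw [Set.mem_uIcc]; push_neg
      constructor <;> intro h <;> [skip; linarith] <;> linarith⟩)]
  have h1 : -α - 1 + 1 = -α := by ring
  rw [h1]
  have hα' : -α ≠ 0 := by intro h; linarith [neg_eq_zero.mp h]
  field_simp
  ring

lemma int_E1 {c a : ℝ} (m : ℕ) (hc : 1 ≤ c) (ha : 0 < a) :
    ∫ x in Ioc 1 c, (α * x ^ (-α-1)) * ((m:ℝ) * (x/a)^α)
      = (m:ℝ) * a ^ (-α) * (α * Real.log c) := by
  have hc0 : (0:ℝ) < c := lt_of_lt_of_le one_pos hc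
  have heq : ∀ x ∈ Ioc (1:ℝ) c, (α * x ^ (-α-1)) * ((m:ℝ) * (x/a)^α)
      = ((m:ℝ) * a ^ (-α) * α) * x⁻¹ := by
    intro x hx
    have hx0 : (0:ℝ) < x := lt_trans one_pos hx.1
    rw [Real.div_rpow (le_of_lt hx0) (le_of_lt ha), Real.rpow_neg (le_of_lt ha), div_eq_mul_inv]
    have : x ^ (-α-1) * x ^ α = x⁻¹ := by
      rw [← Real.rpow_add hx0]
      have : -α - 1 + α = -1 := by ring
      rw [this, Real.rpow_neg_one]
    calc (α * x ^ (-α-1)) * ((m:ℝ) * (x ^ α * (a ^ α)⁻¹))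
        = ((m:ℝ) * (a ^ α)⁻¹ * α) * (x ^ (-α-1) * x ^ α) := by ring
      _ = ((m:ℝ) * (a ^ α)⁻¹ * α) * x⁻¹ := by rw [this]
  rw [setIntegral_congr_fun measurableSet_Ioc heq, ← intervalIntegral.integral_of_le hc,
    intervalIntegral.integral_const_mul, integral_inv_of_pos one_pos hc0]
  rw [div_one]
  ring

lemma int_E2 {c a : ℝ} (m : ℕ) (hc : 1 ≤ c) (ha : 0 < a) :
    ∫ x in Ioc 1 c, (α * x ^ (-α-1)) * ((m:ℝ)^2/2 * ((x/a)^α)^2)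
      = (m:ℝ)^2/2 * (a ^ (-α))^2 * (c ^ α - 1) := by
  have hc0 : (0:ℝ) < c := lt_of_lt_of_le one_pos hc
  have heq : ∀ x ∈ Ioc (1:ℝ) c, (α * x ^ (-α-1)) * ((m:ℝ)^2/2 * ((x/a)^α)^2)
      = ((m:ℝ)^2/2 * (a ^ (-α))^2 * α) * x ^ (α - 1) := by
    intro x hx
    have hx0 : (0:ℝ) < x := lt_trans one_pos hx.1
    have h2 : x ^ (-α-1) * (x ^ α)^2 = x ^ (α - 1) := by
      rw [sq, ← Real.rpow_add hx0, ← Real.rpow_add hx0]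
      congr 1; ring
    have expand : (α * x ^ (-α-1)) * ((m:ℝ)^2/2 * ((x/a)^α)^2)
        = ((m:ℝ)^2/2 * (a ^ (-α))^2 * α) * (x ^ (-α-1) * (x ^ α)^2) := by
      rw [Real.div_rpow (le_of_lt hx0) (le_of_lt ha), Real.rpow_neg (le_of_lt ha)]
      ring
    rw [expand, h2]
  rw [setIntegral_congr_fun measurableSet_Ioc heq, ← intervalIntegral.integral_of_le hc,
    intervalIntegral.integral_const_mul, integral_rpow (Or.inl (by linarith))]
  have h1 : α - 1 + 1 = α := by ring
  rw [h1, Real.one_rpow]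
  have hαne : α ≠ 0 := ne_of_gt hα
  field_simp


lemma main_bounds {a c : ℝ} {m : ℕ} (hm : 1 ≤ m) (hc1 : 1 ≤ c) (hca : c ≤ a)
    (hcm : c ^ α * (m:ℝ) = a ^ α) :
    (m:ℝ) * a^(-α) * (α * Real.log c) - (m:ℝ) * a^(-α) / 2
      ≤ (∫ x in Ioi 1, (α * x ^ (-α-1)) * (1 - (max (1 - (x/a)^α) 0) ^ m))
    ∧ (∫ x in Ioi 1, (α * x ^ (-α-1)) * (1 - (max (1 - (x/a)^α) 0) ^ m))
      ≤ (m:ℝ) * a^(-α) * (α * Real.log c) + (m:ℝ) * a^(-α) := by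
  have ha1 : 1 ≤ a := le_trans hc1 hca
  have ha0 : (0:ℝ) < a := lt_of_lt_of_le one_pos ha1
  have hc0 : (0:ℝ) < c := lt_of_lt_of_le one_pos hc1
  have hm1 : (1:ℝ) ≤ (m:ℝ) := by exact_mod_cast hm
  set g : ℝ → ℝ := fun x => (α * x ^ (-α-1)) * (1 - (max (1 - (x/a)^α) 0) ^ m) with hg
  have hgmeas : Measurable g := by apply Measurable.mul _ (g_meas m); fun_prop
  have hbase : IntegrableOn (fun x : ℝ => α * x ^ (-α-1)) (Ioi 1) :=
    (integrableOn_Ioi_rpow_of_lt (by linarith) one_pos).const_mul α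
  have hbnd : ∀ x ∈ Ioi (1:ℝ), 0 ≤ g x ∧ g x ≤ α * x ^ (-α-1) := by
    intro x hx
    have hx0 : (0:ℝ) < x := lt_trans one_pos hx
    have h1 : (0:ℝ) ≤ α * x ^ (-α-1) := by positivity
    refine ⟨mul_nonneg h1 (g_nonneg ha0 hx0 m), ?_⟩
    have h2 := g_le_one (α := α) (a := a) (x := x) m
    calc g x = (α * x ^ (-α-1)) * (1 - (max (1 - (x/a)^α) 0) ^ m) := rfl
      _ ≤ (α * x ^ (-α-1)) * 1 := mul_le_mul_of_nonneg_left h2 h1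
      _ = α * x ^ (-α-1) := mul_one _
  have hgInt : IntegrableOn g (Ioi 1) := by
    apply Integrable.mono hbase hgmeas.aestronglyMeasurable
    rw [ae_restrict_iff' measurableSet_Ioi]
    filter_upwards with x hx
    have h := hbnd x hx
    rw [Real.norm_eq_abs, Real.norm_eq_abs, abs_of_nonneg h.1,
      abs_of_nonneg (le_trans h.1 h.2)]
    exact h.2
  -- continuity-based integrability on Ioc 1 c
  have hcont1 : ContinuousOn (fun x : ℝ => x ^ (-α-1)) (Icc 1 c) :=
    continuousOn_id.rpow_const fun x hx => Or.inl (by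
      simp only [id_eq]; exact ne_of_gt (lt_of_lt_of_le one_pos hx.1))
  have hcont2 : ContinuousOn (fun x : ℝ => (x/a) ^ α) (Icc 1 c) :=
    (continuousOn_id.div_const a).rpow_const fun x hx => Or.inr (le_of_lt hα)
  have hU1 : IntegrableOn (fun x : ℝ => (α * x ^ (-α-1)) * ((m:ℝ) * (x/a)^α)) (Ioc 1 c) := by
    apply (((continuousOn_const.mul hcont1).mul
      (continuousOn_const.mul hcont2)).integrableOn_Icc).mono_set Ioc_subset_Icc_self
  have hV1 : IntegrableOn
      (fun x : ℝ => (α * x ^ (-α-1)) * ((m:ℝ)^2/2 * ((x/a)^α)^2)) (Ioc 1 c) := by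
    apply (((continuousOn_const.mul hcont1).mul
      (continuousOn_const.mul (hcont2.pow 2))).integrableOn_Icc).mono_set Ioc_subset_Icc_self
  -- splitting
  have hsub1 : Ioc (1:ℝ) c ⊆ Ioi 1 := Ioc_subset_Ioi_self
  have hsub2 : Ioc c a ⊆ Ioi (1:ℝ) := subset_trans Ioc_subset_Ioi_self (Ioi_subset_Ioi hc1)
  have hsub3 : Ioi a ⊆ Ioi (1:ℝ) := Ioi_subset_Ioi ha1
  have hsub12 : Ioc (1:ℝ) a ⊆ Ioi 1 := Ioc_subset_Ioi_self
  have hsplit : ∫ x in Ioi 1, g x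
      = (∫ x in Ioc 1 c, g x) + (∫ x in Ioc c a, g x) + (∫ x in Ioi a, g x) := by
    have e1 : Ioi (1:ℝ) = Ioc 1 a ∪ Ioi a := (Ioc_union_Ioi_eq_Ioi ha1).symm
    have e2 : Ioc (1:ℝ) a = Ioc 1 c ∪ Ioc c a := (Ioc_union_Ioc_eq_Ioc hc1 hca).symm
    rw [e1, setIntegral_union (Ioc_disjoint_Ioi le_rfl) measurableSet_Ioi
      (hgInt.mono_set hsub12) (hgInt.mono_set hsub3), e2,
      setIntegral_union (Ioc_disjoint_Ioc_of_le le_rfl) measurableSet_Ioc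
      (hgInt.mono_set hsub1) (hgInt.mono_set hsub2)]
  -- pointwise facts on Ioc 1 c
  have hpt : ∀ x ∈ Ioc (1:ℝ) c,
      (α * x ^ (-α-1)) * ((m:ℝ) * (x/a)^α - (m:ℝ)^2/2 * ((x/a)^α)^2) ≤ g x
      ∧ g x ≤ (α * x ^ (-α-1)) * ((m:ℝ) * (x/a)^α) := by
    intro x hx
    have hx0 : (0:ℝ) < x := lt_trans one_pos hx.1
    have hfac : (0:ℝ) ≤ α * x ^ (-α-1) := by positivity
    set t : ℝ := (x/a)^α with htdef
    have ht0 : 0 ≤ t := Real.rpow_nonneg (by positivity) _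
    have ht1 : t ≤ 1 := Real.rpow_le_one (by positivity)
      ((div_le_one ha0).mpr (le_trans hx.2 hca)) (le_of_lt hα)
    have hmax : max (1 - t) 0 = 1 - t := max_eq_left (by linarith)
    have hb1 : 1 - (1-t)^m ≤ (m:ℝ) * t := by
      have := bernoulli_pow ht1 m; linarith
    have hb2 : (m:ℝ) * t - (m:ℝ)^2/2 * t^2 ≤ 1 - (1-t)^m := by
      have := pow_one_sub_le ht0 ht1 m; linarith
    rw [hg]
    constructor
    · simp only [← htdef, hmax]
      exact mul_le_mul_of_nonneg_left hb2 hfac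
    · simp only [← htdef, hmax]
      exact mul_le_mul_of_nonneg_left hb1 hfac
  -- region 1 bounds
  have hB1u : ∫ x in Ioc 1 c, g x ≤ (m:ℝ) * a^(-α) * (α * Real.log c) := by
    rw [← int_E1 hα m hc1 ha0]
    exact setIntegral_mono_on (hgInt.mono_set hsub1) hU1 measurableSet_Ioc
      (fun x hx => (hpt x hx).2)
  have hB1l : (m:ℝ) * a^(-α) * (α * Real.log c) - (m:ℝ) * a^(-α)/2 ≤ ∫ x in Ioc 1 c, g x := by
    have hLint : IntegrableOn (fun x : ℝ => (α * x ^ (-α-1)) * ((m:ℝ) * (x/a)^α)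
        - (α * x ^ (-α-1)) * ((m:ℝ)^2/2 * ((x/a)^α)^2)) (Ioc 1 c) := hU1.sub hV1
    have hval : ∫ x in Ioc 1 c, ((α * x ^ (-α-1)) * ((m:ℝ) * (x/a)^α)
        - (α * x ^ (-α-1)) * ((m:ℝ)^2/2 * ((x/a)^α)^2))
        = (m:ℝ) * a^(-α) * (α * Real.log c) - (m:ℝ)^2/2 * (a^(-α))^2 * (c^α - 1) := by
      rw [integral_sub hU1 hV1, int_E1 hα m hc1 ha0, int_E2 hα m hc1 ha0]
    have hmono : ∫ x in Ioc 1 c, ((α * x ^ (-α-1)) * ((m:ℝ) * (x/a)^α)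
        - (α * x ^ (-α-1)) * ((m:ℝ)^2/2 * ((x/a)^α)^2)) ≤ ∫ x in Ioc 1 c, g x := by
      apply setIntegral_mono_on hLint (hgInt.mono_set hsub1) measurableSet_Ioc
      intro x hx
      have := (hpt x hx).1
      linarith [this]
    have heps : a^(-α) * c^α = 1 / (m:ℝ) := by
      rw [Real.rpow_neg (le_of_lt ha0), ← hcm]
      field_simp
    have hepos : (0:ℝ) < a^(-α) := Real.rpow_pos_of_pos ha0 _
    have hkey : (m:ℝ)^2/2 * (a^(-α))^2 * (c^α - 1) ≤ (m:ℝ) * a^(-α)/2 := by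
      have h1 : (a^(-α))^2 * (c^α - 1) ≤ (a^(-α))^2 * c^α := by
        nlinarith [sq_nonneg (a^(-α))]
      have h2 : (a^(-α))^2 * c^α = a^(-α) * (1/(m:ℝ)) := by
        rw [sq, mul_assoc, heps]
      have h3 : (m:ℝ)^2/2 * ((a^(-α))^2 * (c^α-1)) ≤ (m:ℝ)^2/2 * (a^(-α) * (1/(m:ℝ))) := by
        rw [← h2]; exact mul_le_mul_of_nonneg_left h1 (by positivity)
      have hm0 : (m:ℝ) ≠ 0 := by linarith
      calc (m:ℝ)^2/2 * (a^(-α))^2 * (c^α - 1)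
          = (m:ℝ)^2/2 * ((a^(-α))^2 * (c^α-1)) := by ring
        _ ≤ (m:ℝ)^2/2 * (a^(-α) * (1/(m:ℝ))) := h3
        _ = (m:ℝ) * a^(-α)/2 := by field_simp
    linarith
  -- region 2
  have hB2u : ∫ x in Ioc c a, g x ≤ (m:ℝ) * a^(-α) - a^(-α) := by
    have hval : ∫ x in Ioc c a, α * x ^ (-α-1) = (m:ℝ) * a^(-α) - a^(-α) := by
      rw [int_E3 hα hc0 hca]
      congr 1
      rw [Real.rpow_neg (le_of_lt hc0), Real.rpow_neg (le_of_lt ha0), ← hcm]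
      have : c ^ α ≠ 0 := ne_of_gt (Real.rpow_pos_of_pos hc0 _)
      field_simp
    rw [← hval]
    apply setIntegral_mono_on (hgInt.mono_set hsub2)
      ((hbase.mono_set hsub2)) measurableSet_Ioc
    intro x hx
    exact (hbnd x (hsub2 hx)).2
  have hB2l : 0 ≤ ∫ x in Ioc c a, g x :=
    setIntegral_nonneg measurableSet_Ioc fun x hx => (hbnd x (hsub2 hx)).1
  -- region 3
  have hB3u : ∫ x in Ioi a, g x ≤ a^(-α) := by
    rw [← int_E4 hα ha0]
    apply setIntegral_mono_on (hgInt.mono_set hsub3)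
      ((integrableOn_Ioi_rpow_of_lt (by linarith) ha0).const_mul α) measurableSet_Ioi
    intro x hx
    exact (hbnd x (hsub3 hx)).2
  have hB3l : 0 ≤ ∫ x in Ioi a, g x :=
    setIntegral_nonneg measurableSet_Ioi fun x hx => (hbnd x (hsub3 hx)).1
  constructor
  · rw [hsplit]; linarith
  · rw [hsplit]; linarith


noncomputable def Λf (γ : ℝ) (n : ℕ) : ℝ :=
  Real.log ((n:ℝ)^γ * Real.log n / ((n:ℝ)-1))

omit hα in
lemma ratio_tendsto {γ : ℝ} (hγ1 : 1 < γ) (k : ℝ) :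
    Tendsto (fun n : ℕ => (((n:ℝ)-1)/n) * ((Λf γ n + k)/((γ-1) * Real.log n)))
      atTop (nhds 1) := by
  have hγ0 : γ - 1 ≠ 0 := by
    intro h
    have hh : γ = 1 := by linarith
    rw [hh] at hγ1
    exact lt_irrefl 1 hγ1
  have hlogT : Tendsto (fun n : ℕ => Real.log n) atTop atTop :=
    Real.tendsto_log_atTop.comp tendsto_natCast_atTop_atTop
  have h1 : Tendsto (fun n : ℕ => ((n:ℝ)-1)/n) atTop (nhds 1) := by
    have he : (fun n : ℕ => 1 - ((n:ℝ))⁻¹) =ᶠ[atTop] (fun n : ℕ => ((n:ℝ)-1)/n) := by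
      filter_upwards [eventually_ge_atTop 1] with n hn
      have h1 : (1:ℝ) ≤ (n:ℝ) := by exact_mod_cast hn
      have : (n:ℝ) ≠ 0 := by linarith
      field_simp
    have : Tendsto (fun n : ℕ => 1 - ((n:ℝ))⁻¹) atTop (nhds (1 - 0)) :=
      tendsto_const_nhds.sub (tendsto_inv_atTop_zero.comp tendsto_natCast_atTop_atTop)
    rw [sub_zero] at this
    exact this.congr' he
  have hloglog : Tendsto (fun n : ℕ => Real.log (Real.log n) / Real.log n) atTop (nhds 0) :=
    (Real.isLittleO_log_id_atTop.tendsto_div_nhds_zero).comp hlogT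
  have hinvlog : Tendsto (fun n : ℕ => (Real.log n)⁻¹) atTop (nhds 0) :=
    tendsto_inv_atTop_zero.comp hlogT
  have hbase : Tendsto (fun n : ℕ => (n:ℝ)/((n:ℝ)-1)) atTop (nhds 1) := by
    have he : (fun n : ℕ => 1 + ((n:ℝ)-1)⁻¹) =ᶠ[atTop] (fun n : ℕ => (n:ℝ)/((n:ℝ)-1)) := by
      filter_upwards [eventually_ge_atTop 2] with n hn
      have h2 : (2:ℝ) ≤ (n:ℝ) := by exact_mod_cast hn
      have : (n:ℝ) - 1 ≠ 0 := by intro h; nlinarith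
      field_simp
      ring
    have ht : Tendsto (fun n : ℕ => (n:ℝ)-1) atTop atTop :=
      tendsto_atTop_add_const_right _ (-1) tendsto_natCast_atTop_atTop
    have : Tendsto (fun n : ℕ => 1 + ((n:ℝ)-1)⁻¹) atTop (nhds (1 + 0)) :=
      tendsto_const_nhds.add (tendsto_inv_atTop_zero.comp ht)
    rw [add_zero] at this
    exact this.congr' he
  have hratio0 : Tendsto (fun n : ℕ => Real.log ((n:ℝ)/((n:ℝ)-1))) atTop (nhds 0) := by
    have := (Real.continuousAt_log (one_ne_zero)).tendsto.comp hbase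
    rwa [Real.log_one] at this
  have hratio : Tendsto (fun n : ℕ => Real.log ((n:ℝ)/((n:ℝ)-1)) / Real.log n) atTop (nhds 0) := by
    have := hratio0.mul hinvlog
    rw [mul_zero] at this
    exact this.congr (fun n => (div_eq_mul_inv _ _).symm)
  have hklog : Tendsto (fun n : ℕ => k / Real.log n) atTop (nhds 0) := by
    have := hinvlog.const_mul k
    rw [mul_zero] at this
    exact this.congr (fun n => (div_eq_mul_inv _ _).symm)
  have key : (fun n : ℕ => (((n:ℝ)-1)/n) * (1 + (γ-1)⁻¹ * (Real.log (Real.log n) / Real.log n)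
        + (γ-1)⁻¹ * (Real.log ((n:ℝ)/((n:ℝ)-1)) / Real.log n) + (γ-1)⁻¹ * (k / Real.log n)))
      =ᶠ[atTop] (fun n : ℕ => (((n:ℝ)-1)/n) * ((Λf γ n + k)/((γ-1) * Real.log n))) := by
    filter_upwards [eventually_ge_atTop 3] with n hn
    have hn3 : (3:ℝ) ≤ (n:ℝ) := by exact_mod_cast hn
    have hn0 : (0:ℝ) < n := by linarith
    have hlog1 : 1 ≤ Real.log n := by
      rw [Real.le_log_iff_exp_le hn0]
      calc Real.exp 1 ≤ 2.7182818286 := le_of_lt Real.exp_one_lt_d9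
        _ ≤ (n:ℝ) := by linarith
    have hlogne : Real.log n ≠ 0 := by linarith
    have hm0 : (n:ℝ) - 1 ≠ 0 := by intro h; nlinarith
    have hm0' : (0:ℝ) < (n:ℝ) - 1 := by linarith
    have hrp : (0:ℝ) < (n:ℝ)^γ := Real.rpow_pos_of_pos hn0 _
    have e1 : Λf γ n = γ * Real.log n + Real.log (Real.log n) - Real.log ((n:ℝ)-1) := by
      rw [Λf, Real.log_div (by positivity) hm0, Real.log_mul (ne_of_gt hrp) hlogne,
        Real.log_rpow hn0]
    have e2 : Real.log ((n:ℝ)/((n:ℝ)-1)) = Real.log n - Real.log ((n:ℝ)-1) :=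
      Real.log_div (by positivity) hm0
    rw [e1, e2]
    congr 1
    field_simp
    ring
  have hfinal : Tendsto (fun n : ℕ => (((n:ℝ)-1)/n) * (1 + (γ-1)⁻¹ * (Real.log (Real.log n) / Real.log n)
        + (γ-1)⁻¹ * (Real.log ((n:ℝ)/((n:ℝ)-1)) / Real.log n) + (γ-1)⁻¹ * (k / Real.log n)))
      atTop (nhds (1 * (1 + (γ-1)⁻¹ * 0 + (γ-1)⁻¹ * 0 + (γ-1)⁻¹ * 0))) := by
    exact h1.mul (((tendsto_const_nhds.add (hloglog.const_mul _)).add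
      (hratio.const_mul _)).add (hklog.const_mul _))
  rw [show (1 * (1 + (γ-1)⁻¹ * 0 + (γ-1)⁻¹ * 0 + (γ-1)⁻¹ * 0) : ℝ) = 1 by ring] at hfinal
  exact hfinal.congr' key


lemma sandwich {γ : ℝ} (hγ1 : 1 < γ) {n : ℕ} (hn : 3 ≤ n) :
    ((((n:ℝ)-1)/n) * ((Λf γ n + -(1/2))/((γ-1) * Real.log n))
      ≤ (n : ℝ) * (((paretoMeasure α).prod (Measure.pi fun _ : Fin (n-1) => paretoMeasure α))
        {p : ℝ × (Fin (n-1) → ℝ) | ∃ i, p.1 * p.2 i > aSeq α γ n}).toReal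
      / ((γ - 1) * (n : ℝ) ^ (2 - γ)))
    ∧ ((n : ℝ) * (((paretoMeasure α).prod (Measure.pi fun _ : Fin (n-1) => paretoMeasure α))
        {p : ℝ × (Fin (n-1) → ℝ) | ∃ i, p.1 * p.2 i > aSeq α γ n}).toReal
      / ((γ - 1) * (n : ℝ) ^ (2 - γ))
      ≤ (((n:ℝ)-1)/n) * ((Λf γ n + 1)/((γ-1) * Real.log n))) := by
  have hn3 : (3:ℝ) ≤ (n:ℝ) := by exact_mod_cast hn
  have hn0 : (0:ℝ) < n := by linarith
  have hγ0 : (0:ℝ) < γ - 1 := by linarith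
  have hlog1 : 1 ≤ Real.log n := by
    rw [Real.le_log_iff_exp_le hn0]
    calc Real.exp 1 ≤ 2.7182818286 := le_of_lt Real.exp_one_lt_d9
      _ ≤ (n:ℝ) := by linarith
  have hlogpos : (0:ℝ) < Real.log n := by linarith
  have hm1 : 1 ≤ n - 1 := by omega
  have hmcast : ((n-1 : ℕ):ℝ) = (n:ℝ) - 1 := by
    rw [Nat.cast_sub (by omega), Nat.cast_one]
  have hmR1 : (1:ℝ) ≤ (n:ℝ) - 1 := by linarith
  have hmR0 : (0:ℝ) < (n:ℝ) - 1 := by linarith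
  set X : ℝ := (n:ℝ)^γ * Real.log n with hXdef
  have hnle : (n:ℝ) ≤ X := by
    have h1 : (n:ℝ) ^ (1:ℝ) ≤ (n:ℝ)^γ :=
      Real.rpow_le_rpow_of_exponent_le (by linarith) (by linarith)
    rw [Real.rpow_one] at h1
    calc (n:ℝ) = (n:ℝ) * 1 := (mul_one _).symm
      _ ≤ (n:ℝ)^γ * Real.log n := by
          apply mul_le_mul h1 hlog1 zero_le_one (by positivity)
  have hX1 : (1:ℝ) ≤ X := by linarith
  have hX0 : (0:ℝ) < X := by linarith
  have hXne : X ≠ 0 := ne_of_gt hX0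
  -- a = aSeq
  have haX : (aSeq α γ n) ^ α = X := by
    rw [aSeq, ← Real.rpow_mul (le_of_lt hX0), one_div, inv_mul_cancel₀ (ne_of_gt hα),
      Real.rpow_one]
  have ha1 : 1 ≤ aSeq α γ n := Real.one_le_rpow hX1 (by positivity)
  have ha0 : (0:ℝ) < aSeq α γ n := lt_of_lt_of_le one_pos ha1
  -- c
  set c : ℝ := (X / ((n:ℝ)-1)) ^ (1/α) with hcdef
  have hXm0 : (0:ℝ) < X / ((n:ℝ)-1) := by positivity
  have hcX : c ^ α = X / ((n:ℝ)-1) := by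
    rw [hcdef, ← Real.rpow_mul (le_of_lt hXm0), one_div, inv_mul_cancel₀ (ne_of_gt hα),
      Real.rpow_one]
  have hc1 : 1 ≤ c := Real.one_le_rpow (by
    rw [le_div_iff₀ hmR0]; linarith) (by positivity)
  have hc0 : (0:ℝ) < c := lt_of_lt_of_le one_pos hc1
  have hca : c ≤ aSeq α γ n := by
    rw [hcdef, aSeq, ← hXdef]
    apply Real.rpow_le_rpow (le_of_lt hXm0) (div_le_self (le_of_lt hX0) hmR1) (by positivity)
  have hcm : c ^ α * ((n-1 : ℕ):ℝ) = (aSeq α γ n) ^ α := by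
    rw [hcX, haX, hmcast]
    field_simp
  -- bounds
  have hb := main_bounds hα hm1 hc1 hca hcm
  have hPeq := prob_integral hα ha1 (n-1)
  have hεX : (aSeq α γ n) ^ (-α) = X⁻¹ := by
    rw [Real.rpow_neg (le_of_lt ha0), haX]
  have hαlogc : α * Real.log c = Λf γ n := by
    rw [← Real.log_rpow hc0, hcX, Λf]
  set P : ℝ := (((paretoMeasure α).prod (Measure.pi fun _ : Fin (n-1) => paretoMeasure α))
        {p : ℝ × (Fin (n-1) → ℝ) | ∃ i, p.1 * p.2 i > aSeq α γ n}).toReal with hPdef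
  have hlow : ((n:ℝ)-1) * X⁻¹ * (Λf γ n - 1/2) ≤ P := by
    calc ((n:ℝ)-1) * X⁻¹ * (Λf γ n - 1/2)
        = ((n-1:ℕ):ℝ) * (aSeq α γ n)^(-α) * (α * Real.log c)
          - ((n-1:ℕ):ℝ) * (aSeq α γ n)^(-α) / 2 := by
          rw [hmcast, hεX, hαlogc]; ring
      _ ≤ _ := hb.1
      _ = P := hPeq.symm
  have hupp : P ≤ ((n:ℝ)-1) * X⁻¹ * (Λf γ n + 1) := by
    calc P = _ := hPeq
      _ ≤ ((n-1:ℕ):ℝ) * (aSeq α γ n)^(-α) * (α * Real.log c)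
          + ((n-1:ℕ):ℝ) * (aSeq α γ n)^(-α) := hb.2
      _ = ((n:ℝ)-1) * X⁻¹ * (Λf γ n + 1) := by rw [hmcast, hεX, hαlogc]; ring
  -- algebraic identity
  have hrpγ : (0:ℝ) < (n:ℝ)^γ := Real.rpow_pos_of_pos hn0 _
  have hrp2γ : (0:ℝ) < (n:ℝ)^(2-γ) := Real.rpow_pos_of_pos hn0 _
  have hpow2 : (n:ℝ)^(2-γ) * (n:ℝ)^γ = (n:ℝ) * (n:ℝ) := by
    rw [← Real.rpow_add hn0]
    rw [show (2 - γ + γ : ℝ) = ((2:ℕ):ℝ) by push_cast; ring, Real.rpow_natCast]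
    ring
  have hid : ∀ Z : ℝ, (n:ℝ) * (((n:ℝ)-1) * X⁻¹ * Z) / ((γ-1) * (n:ℝ)^(2-γ))
      = (((n:ℝ)-1)/n) * (Z/((γ-1) * Real.log n)) := by
    intro Z
    have hsub : (n:ℝ)^(2-γ) = (n:ℝ) * (n:ℝ) / (n:ℝ)^γ := by
      rw [eq_div_iff (ne_of_gt hrpγ)]
      exact hpow2
    rw [hsub, hXdef]
    have h1 : (n:ℝ) ≠ 0 := ne_of_gt hn0
    have h2 : Real.log n ≠ 0 := ne_of_gt hlogpos
    have h3 : (γ:ℝ) - 1 ≠ 0 := ne_of_gt hγ0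
    field_simp
  have hD : (0:ℝ) < (γ-1) * (n:ℝ)^(2-γ) := by positivity
  constructor
  · rw [show Λf γ n + -(1/2) = Λf γ n - 1/2 by ring, ← hid (Λf γ n - 1/2)]
    apply div_le_div_of_nonneg_right ?_ hD.le
    exact mul_le_mul_of_nonneg_left hlow (le_of_lt hn0)
  · rw [← hid (Λf γ n + 1)]
    apply div_le_div_of_nonneg_right ?_ hD.le
    exact mul_le_mul_of_nonneg_left hupp (le_of_lt hn0)

end Stmt3Aux

open Stmt3Aux in
theorem stmt3 (α γ : ℝ) (hα : 0 < α) (hγ1 : 1 < γ) (hγ2 : γ ≤ 2) :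
    Tendsto (fun n : ℕ =>
      (n : ℝ) * (((paretoMeasure α).prod (Measure.pi fun _ : Fin (n-1) => paretoMeasure α))
        {p : ℝ × (Fin (n-1) → ℝ) | ∃ i, p.1 * p.2 i > aSeq α γ n}).toReal
      / ((γ - 1) * (n : ℝ) ^ (2 - γ))) atTop (nhds 1) := by
  apply tendsto_of_tendsto_of_tendsto_of_le_of_le' (ratio_tendsto hγ1 (-(1/2)))
    (ratio_tendsto hγ1 1)
  · filter_upwards [eventually_ge_atTop 3] with n hn
    exact (sandwich hα hγ1 hn).1
  · filter_upwards [eventually_ge_atTop 3] with n hn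
    exact (sandwich hα hγ1 hn).2
end

section
/- In the super-critical regime a_n^α = n^γ log n with γ > 2, the probability that the clique consists of exactly one vertex connected to at least one follower (i.e. exactly one X_i exceeds √a_n and it forms at least one edge) is asymptotically (γ/2 − 1) n^{2−γ}. -/
open MeasureTheory Filter Real Set

open scoped Topology

section OneDim
variable {α : ℝ} (hα : 0 < α)

lemma pareto_eq_pareto : paretoMeasure α = ProbabilityTheory.paretoMeasure 1 α := by
  unfold paretoMeasure ProbabilityTheory.paretoMeasure
  congr 1
  funext x
  rw [ProbabilityTheory.paretoPDF_eq, one_rpow]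
  ring_nf

include hα in
lemma pareto_prob : IsProbabilityMeasure (paretoMeasure α) := by
  rw [pareto_eq_pareto]
  exact ProbabilityTheory.isProbabilityMeasure_paretoMeasure one_pos hα

include hα in
lemma pareto_Ioi {c : ℝ} (hc : 1 ≤ c) :
    paretoMeasure α (Ioi c) = ENNReal.ofReal (c ^ (-α)) := by
  have hc0 : 0 < c := lt_of_lt_of_le one_pos hc
  rw [paretoMeasure, withDensity_apply _ measurableSet_Ioi]
  have h1 : ∀ x ∈ Ioi c, ENNReal.ofReal (if 1 ≤ x then α * x ^ (-α - 1) else 0)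
      = ENNReal.ofReal (α * x ^ (-α - 1)) := by
    intro x hx
    rw [if_pos (le_trans hc (le_of_lt hx))]
  rw [setLIntegral_congr_fun measurableSet_Ioi h1]
  have hint : IntegrableOn (fun x : ℝ => α * x ^ (-α - 1)) (Ioi c) := by
    exact (integrableOn_Ioi_rpow_of_lt (by linarith) hc0).const_mul α
  rw [← ofReal_integral_eq_lintegral_ofReal hint]
  · rw [integral_const_mul, integral_Ioi_rpow_of_lt (by linarith) hc0]
    congr 1
    have : -α - 1 + 1 = -α := by ring
    rw [this]
    field_simp
  · refine ae_restrict_of_forall_mem measurableSet_Ioi fun x hx => ?_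
    have hx0 : 0 < x := lt_trans hc0 hx
    positivity

include hα in
lemma pareto_Iic {c : ℝ} (hc : 1 ≤ c) :
    paretoMeasure α (Iic c) = ENNReal.ofReal (1 - c ^ (-α)) := by
  have := pareto_prob hα
  have h1 : paretoMeasure α (Iic c) = paretoMeasure α univ - paretoMeasure α (Ioi c) := by
    rw [← compl_Ioi]
    exact measure_compl measurableSet_Ioi (measure_ne_top _ _)
  rw [h1, measure_univ, pareto_Ioi hα hc, ← ENNReal.ofReal_one,
    ← ENNReal.ofReal_sub _ (by positivity)]

lemma pareto_Iic_zero {c : ℝ} (hc : c < 1) : paretoMeasure α (Iic c) = 0 := by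
  rw [paretoMeasure, withDensity_apply _ measurableSet_Iic]
  have h1 : ∀ x ∈ Iic c, ENNReal.ofReal (if 1 ≤ x then α * x ^ (-α - 1) else 0) = 0 := by
    intro x hx
    rw [if_neg (by simp only [mem_Iic] at hx; linarith), ENNReal.ofReal_zero]
  rw [setLIntegral_congr_fun measurableSet_Iic h1, lintegral_zero]

end OneDim

section Product
variable {α : ℝ}

def eventT (s a : ℝ) (m : ℕ) : Set (ℝ × (Fin m → ℝ)) :=
  {p | s < p.1 ∧ (∀ k, p.2 k ≤ s) ∧ ∃ j, a < p.1 * p.2 j}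

def eventS (s a : ℝ) (n : ℕ) (i : Fin n) : Set (Fin n → ℝ) :=
  {ω | ω i > s ∧ (∀ k, ω k > s → k = i) ∧ ∃ j, j ≠ i ∧ ω i * ω j > a}

lemma measurable_eventT (s a : ℝ) (m : ℕ) : MeasurableSet (eventT s a m) := by
  have h1 : eventT s a m = (Prod.fst ⁻¹' Ioi s) ∩
      ((⋂ k, (fun p : ℝ × (Fin m → ℝ) => p.2 k) ⁻¹' Iic s) ∩
       (⋃ j, (fun p : ℝ × (Fin m → ℝ) => p.1 * p.2 j) ⁻¹' Ioi a)) := by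
    ext p
    simp [eventT, mem_iInter]
  rw [h1]
  refine (measurable_fst measurableSet_Ioi).inter (MeasurableSet.inter ?_ ?_)
  · exact MeasurableSet.iInter fun k =>
      ((measurable_pi_apply k).comp measurable_snd) measurableSet_Iic
  · refine MeasurableSet.iUnion fun j => ?_
    have hm : Measurable fun p : ℝ × (Fin m → ℝ) => p.1 * p.2 j :=
      measurable_fst.mul ((measurable_pi_apply j).comp measurable_snd)
    exact hm measurableSet_Ioi

lemma measurable_eventS (s a : ℝ) (n : ℕ) (i : Fin n) : MeasurableSet (eventS s a n i) := by
  have h1 : eventS s a n i = ((fun ω : Fin n → ℝ => ω i) ⁻¹' Ioi s) ∩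
      ((⋂ k, {ω : Fin n → ℝ | ω k > s → k = i}) ∩
       (⋃ j, if j = i then ∅ else (fun ω : Fin n → ℝ => ω i * ω j) ⁻¹' Ioi a)) := by
    ext ω
    simp only [eventS, mem_setOf_eq, mem_inter_iff, mem_preimage, mem_iInter, mem_iUnion,
      mem_Ioi, mem_setOf_eq]
    constructor
    · rintro ⟨h1, h2, j, hj, h3⟩
      exact ⟨h1, h2, j, by simp [hj, h3]⟩
    · rintro ⟨h1, h2, j, hj⟩
      by_cases hji : j = i
      · simp [hji] at hj
      · simp [hji] at hj
        exact ⟨h1, h2, j, hji, hj⟩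
  rw [h1]
  refine ((measurable_pi_apply i) measurableSet_Ioi).inter (MeasurableSet.inter ?_ ?_)
  · refine MeasurableSet.iInter fun k => ?_
    by_cases hk : k = i
    · have : {ω : Fin n → ℝ | ω k > s → k = i} = univ := by ext ω; simp [hk]
      rw [this]; exact MeasurableSet.univ
    · have : {ω : Fin n → ℝ | ω k > s → k = i} = (fun ω : Fin n → ℝ => ω k) ⁻¹' Iic s := by
        ext ω; simp only [mem_setOf_eq, mem_preimage, mem_Iic]
        constructor
        · intro h; by_contra hc; exact hk (h (not_le.mp hc))
        · intro h hgt; exact absurd h (not_le.mpr hgt)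
      rw [this]; exact (measurable_pi_apply k) measurableSet_Iic
  · refine MeasurableSet.iUnion fun j => ?_
    by_cases hj : j = i
    · simp [hj]
    · simp only [hj, if_false]
      exact ((measurable_pi_apply i).mul (measurable_pi_apply j)) measurableSet_Ioi

lemma eventS_preimage (s a : ℝ) (m : ℕ) (i : Fin (m+1)) :
    eventS s a (m+1) i = (MeasurableEquiv.piFinSuccAbove (fun _ => ℝ) i) ⁻¹' (eventT s a m) := by
  have he : ∀ ω : Fin (m+1) → ℝ, (MeasurableEquiv.piFinSuccAbove (fun _ => ℝ) i) ω
      = (ω i, fun j => ω (i.succAbove j)) := by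
    intro ω; simp [MeasurableEquiv.piFinSuccAbove]; rfl
  ext ω
  simp only [eventS, eventT, mem_setOf_eq, mem_preimage, he]
  constructor
  · rintro ⟨h1, h2, j, hj, h3⟩
    refine ⟨h1, fun k => ?_, ?_⟩
    · by_contra h
      push_neg at h
      exact Fin.succAbove_ne i k (h2 _ h)
    · obtain ⟨z, hz⟩ := Fin.exists_succAbove_eq hj
      exact ⟨z, by rw [hz]; exact h3⟩
  · rintro ⟨h1, h2, j, h3⟩
    refine ⟨h1, fun k hk => ?_, ⟨i.succAbove j, Fin.succAbove_ne i j, h3⟩⟩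
    by_contra hki
    obtain ⟨z, hz⟩ := Fin.exists_succAbove_eq hki
    rw [← hz] at hk
    exact absurd hk (not_lt.mpr (h2 z))

lemma event_eq_iUnion (s a : ℝ) (n : ℕ) :
    {ω : Fin n → ℝ | ∃ i, ω i > s ∧ (∀ k, ω k > s → k = i) ∧
      ∃ j, j ≠ i ∧ ω i * ω j > a} = ⋃ i, eventS s a n i := by
  ext ω; simp [eventS]

lemma disjoint_eventS (s a : ℝ) (n : ℕ) :
    Pairwise (Function.onFun Disjoint fun i => eventS s a n i) := by
  intro i i' hii'
  rw [Function.onFun, disjoint_left]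
  rintro ω ⟨h1, h2, -⟩ ⟨-, h2', -⟩
  exact hii' ((h2' i h1).symm ▸ rfl)

end Product

section MeasureT
variable {α : ℝ}

lemma slice_eventT_of_lt {s a : ℝ} (hs0 : 0 < s) {m : ℕ} {x : ℝ} (hx : s < x) :
    Prod.mk x ⁻¹' eventT s a m =
      (univ.pi fun _ : Fin m => Iic s) \ (univ.pi fun _ : Fin m => Iic (a/x)) := by
  have hx0 : 0 < x := hs0.trans hx
  ext y
  simp only [eventT, mem_preimage, mem_setOf_eq, mem_diff, Set.mem_pi, mem_univ,
    forall_true_left, mem_Iic]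
  constructor
  · rintro ⟨-, h2, j, h3⟩
    refine ⟨fun k => h2 k, fun hC => ?_⟩
    have h4 : y j ≤ a / x := hC j
    have h5 : y j * x ≤ a := (le_div_iff₀ hx0).mp h4
    nlinarith
  · rintro ⟨h2, h3⟩
    simp only [Set.mem_pi, mem_univ, forall_true_left, mem_Iic, not_forall, not_le] at h3
    obtain ⟨j, hj⟩ := h3
    refine ⟨hx, fun k => h2 k, j, ?_⟩
    have := (div_lt_iff₀ hx0).mp hj
    nlinarith

lemma slice_eventT_of_le {s a : ℝ} {m : ℕ} {x : ℝ} (hx : x ≤ s) :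
    Prod.mk x ⁻¹' eventT s a m = ∅ := by
  ext y
  simp only [eventT, mem_preimage, mem_setOf_eq, mem_empty_iff_false, iff_false, not_and]
  intro h
  exact absurd h (not_lt.mpr hx)

lemma measure_eventT (hα : 0 < α) {s a : ℝ} (hs1 : 1 < s) (ha : a = s^2) {m : ℕ} (hm : 1 ≤ m) :
    ((paretoMeasure α).prod (Measure.pi fun _ : Fin m => paretoMeasure α)) (eventT s a m)
    = ENNReal.ofReal ((1 - s^(-α))^m * a^(-α)
        + ∫ x in s..a, α * x^(-α-1) * ((1 - s^(-α))^m - (1 - (a/x)^(-α))^m)) := by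
  haveI : IsProbabilityMeasure (paretoMeasure α) := pareto_prob hα
  have hs0 : 0 < s := lt_trans one_pos hs1
  have hsa : s < a := by nlinarith
  have ha1 : 1 < a := lt_trans hs1 hsa
  have hε1 : s ^ (-α) ≤ 1 := rpow_le_one_of_one_le_of_nonpos hs1.le (by linarith)
  have hε0 : 0 ≤ s ^ (-α) := rpow_nonneg hs0.le _
  -- slice function equality
  have hslice : ∀ x : ℝ, (Measure.pi fun _ : Fin m => paretoMeasure α)
      (Prod.mk x ⁻¹' eventT s a m)
      = (Ioi s).indicator (fun x => (paretoMeasure α (Iic s))^m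
          - (paretoMeasure α (Iic (a/x)))^m) x := by
    intro x
    by_cases hx : s < x
    · rw [Set.indicator_apply, if_pos (show x ∈ Ioi s from hx), slice_eventT_of_lt hs0 hx]
      have hsub : (univ.pi fun _ : Fin m => Iic (a/x)) ⊆ (univ.pi fun _ : Fin m => Iic s) := by
        apply Set.pi_mono
        intro i _
        apply Iic_subset_Iic.mpr
        have : a / x < a / s := by
          apply div_lt_div_of_pos_left (by linarith) hs0 hx
        have has : a / s = s := by rw [ha]; field_simp
        linarith
      rw [measure_diff hsub
        ((MeasurableSet.univ_pi fun _ => measurableSet_Iic).nullMeasurableSet)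
        (measure_ne_top _ _), Measure.pi_pi, Measure.pi_pi]
      simp [Finset.prod_const]
    · rw [Set.indicator_apply, if_neg (show x ∉ Ioi s from hx), slice_eventT_of_le (not_lt.mp hx), measure_empty]
  have hnn : ∀ x ∈ Icc s a, 0 ≤ α * x^(-α-1) * ((1 - s^(-α))^m - (1 - (a/x)^(-α))^m) := by
    intro x hx
    obtain ⟨hx1, hx2⟩ := hx
    have hx0 : 0 < x := lt_of_lt_of_le hs0 hx1
    have hax1 : 1 ≤ a / x := (one_le_div hx0).mpr hx2
    have haxs : a / x ≤ s := by
      have h5 : a / x ≤ a / s := div_le_div_of_nonneg_left (by nlinarith) hs0 hx1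
      have has : a / s = s := by rw [ha]; field_simp
      linarith
    have h1 : s ^ (-α) ≤ (a/x) ^ (-α) :=
      rpow_le_rpow_of_nonpos (by linarith) haxs (by linarith)
    have h2 : (a/x) ^ (-α) ≤ 1 := rpow_le_one_of_one_le_of_nonpos hax1 (by linarith)
    have h3 : (1 - (a/x)^(-α))^m ≤ (1 - s^(-α))^m :=
      pow_le_pow_left₀ (by linarith) (by linarith) m
    have h4 : (0:ℝ) < x ^ (-α-1) := rpow_pos_of_pos hx0 _
    have h5 : 0 ≤ (1 - s^(-α))^m - (1 - (a/x)^(-α))^m := by linarith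
    positivity
  rw [Measure.prod_apply (measurable_eventT s a m)]
  rw [lintegral_congr hslice, lintegral_indicator measurableSet_Ioi]
  rw [← Ioc_union_Ioi_eq_Ioi hsa.le,
    lintegral_union measurableSet_Ioi (Ioc_disjoint_Ioi le_rfl)]
  -- the Ioi a part
  have hIoi : ∫⁻ x in Ioi a, ((paretoMeasure α (Iic s))^m
      - (paretoMeasure α (Iic (a/x)))^m) ∂(paretoMeasure α)
      = ENNReal.ofReal ((1 - s^(-α))^m * a^(-α)) := by
    have hcongr : ∀ x ∈ Ioi a, ((paretoMeasure α (Iic s))^m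
        - (paretoMeasure α (Iic (a/x)))^m)
        = ENNReal.ofReal ((1 - s^(-α))^m) := by
      intro x hx
      rw [mem_Ioi] at hx
      have : a / x < 1 := (div_lt_one (by linarith)).mpr hx
      rw [pareto_Iic_zero this, zero_pow (by omega), tsub_zero, pareto_Iic hα hs1.le,
        ENNReal.ofReal_pow (by linarith)]
    rw [setLIntegral_congr_fun measurableSet_Ioi hcongr,
      setLIntegral_const, pareto_Ioi hα ha1.le,
      ← ENNReal.ofReal_mul (pow_nonneg (by linarith) m)]
  -- the Ioc part
  have hIoc : ∫⁻ x in Ioc s a, ((paretoMeasure α (Iic s))^m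
      - (paretoMeasure α (Iic (a/x)))^m) ∂(paretoMeasure α)
      = ENNReal.ofReal (∫ x in s..a, α * x^(-α-1) * ((1 - s^(-α))^m - (1 - (a/x)^(-α))^m)) := by
    have hptwise : ∀ x ∈ Ioc s a, ((paretoMeasure α (Iic s))^m
        - (paretoMeasure α (Iic (a/x)))^m)
        = ENNReal.ofReal ((1 - s^(-α))^m - (1 - (a/x)^(-α))^m) := by
      intro x hx
      obtain ⟨hx1, hx2⟩ := hx
      have hx0 : 0 < x := hs0.trans hx1
      have hax1 : 1 ≤ a / x := (one_le_div hx0).mpr hx2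
      have hax2 : (a/x) ^ (-α) ≤ 1 := rpow_le_one_of_one_le_of_nonpos hax1 (by linarith)
      rw [pareto_Iic hα hs1.le, pareto_Iic hα hax1,
        ← ENNReal.ofReal_pow (by linarith : (0:ℝ) ≤ 1 - s ^ (-α)),
        ← ENNReal.ofReal_pow (by linarith : (0:ℝ) ≤ 1 - (a/x) ^ (-α)),
        ← ENNReal.ofReal_sub _ (pow_nonneg (by linarith) m)]
    rw [setLIntegral_congr_fun measurableSet_Ioc hptwise]
    -- unfold withDensity
    have hgmeas : Measurable fun x : ℝ =>
        ENNReal.ofReal ((1 - s^(-α))^m - (1 - (a/x)^(-α))^m) := by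
      fun_prop
    have hfmeas : Measurable fun x : ℝ =>
        ENNReal.ofReal (if 1 ≤ x then α * x ^ (-α - 1) else 0) := by
      apply ENNReal.measurable_ofReal.comp
      apply Measurable.ite measurableSet_Ici _ measurable_const
      fun_prop
    rw [paretoMeasure, restrict_withDensity measurableSet_Ioc,
      lintegral_withDensity_eq_lintegral_mul _ hfmeas hgmeas]
    have hptwise2 : ∀ x ∈ Ioc s a,
        ((fun x : ℝ => ENNReal.ofReal (if 1 ≤ x then α * x ^ (-α - 1) else 0)) *
          fun x : ℝ => ENNReal.ofReal ((1 - s^(-α))^m - (1 - (a/x)^(-α))^m)) x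
        = ENNReal.ofReal (α * x^(-α-1) * ((1 - s^(-α))^m - (1 - (a/x)^(-α))^m)) := by
      intro x hx
      obtain ⟨hx1, hx2⟩ := hx
      have hx0 : 0 < x := hs0.trans hx1
      simp only [Pi.mul_apply]
      rw [if_pos (by linarith), ← ENNReal.ofReal_mul (by positivity)]
    rw [setLIntegral_congr_fun measurableSet_Ioc hptwise2]
    have hcont : ContinuousOn (fun x : ℝ =>
        α * x^(-α-1) * ((1 - s^(-α))^m - (1 - (a/x)^(-α))^m)) (Icc s a) := by
      have hne : ∀ x ∈ Icc s a, x ≠ 0 := fun x hx => ne_of_gt (lt_of_lt_of_le hs0 hx.1)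
      apply ContinuousOn.mul
      · exact continuousOn_const.mul (continuousOn_id.rpow_const fun x hx => Or.inl (hne x hx))
      · apply ContinuousOn.sub continuousOn_const
        apply ContinuousOn.pow
        apply ContinuousOn.sub continuousOn_const
        exact (continuousOn_const.div continuousOn_id hne).rpow_const
          fun x hx => Or.inl (by
            have hx0 : 0 < x := lt_of_lt_of_le hs0 hx.1
            have : 0 < a / x := div_pos (by nlinarith) hx0
            exact ne_of_gt this)
    have hint : IntegrableOn (fun x : ℝ =>
        α * x^(-α-1) * ((1 - s^(-α))^m - (1 - (a/x)^(-α))^m)) (Ioc s a) volume :=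
      hcont.integrableOn_Icc.mono_set Ioc_subset_Icc_self
    rw [← ofReal_integral_eq_lintegral_ofReal hint
      (ae_restrict_of_forall_mem measurableSet_Ioc fun x hx =>
        hnn x (Ioc_subset_Icc_self hx)),
      intervalIntegral.integral_of_le hsa.le]
  rw [hIoc, hIoi, ← ENNReal.ofReal_add (intervalIntegral.integral_nonneg hsa.le hnn)
    (mul_nonneg (pow_nonneg (by linarith) m) (rpow_nonneg (by linarith) _)), add_comm]
end MeasureT

section Assemble
variable {α : ℝ}

lemma measure_event (hα : 0 < α) {s a : ℝ} (hs1 : 1 < s) (ha : a = s^2) {m : ℕ} (hm : 1 ≤ m) :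
    (Measure.pi fun _ : Fin (m+1) => paretoMeasure α)
      {ω : Fin (m+1) → ℝ | ∃ i, ω i > s ∧ (∀ k, ω k > s → k = i) ∧
        ∃ j, j ≠ i ∧ ω i * ω j > a}
    = (m+1) * ENNReal.ofReal ((1 - s^(-α))^m * a^(-α)
        + ∫ x in s..a, α * x^(-α-1) * ((1 - s^(-α))^m - (1 - (a/x)^(-α))^m)) := by
  haveI := pareto_prob hα
  rw [event_eq_iUnion s a (m+1),
    measure_iUnion (disjoint_eventS s a (m+1)) (measurable_eventS s a (m+1))]
  have hSi : ∀ i : Fin (m+1),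
      (Measure.pi fun _ : Fin (m+1) => paretoMeasure α) (eventS s a (m+1) i)
      = ENNReal.ofReal ((1 - s^(-α))^m * a^(-α)
        + ∫ x in s..a, α * x^(-α-1) * ((1 - s^(-α))^m - (1 - (a/x)^(-α))^m)) := by
    intro i
    rw [eventS_preimage s a m i, ← measure_eventT hα hs1 ha hm]
    exact MeasurePreserving.measure_preimage
      (measurePreserving_piFinSuccAbove (fun _ : Fin (m+1) => paretoMeasure α) i)
      (measurable_eventT s a m).nullMeasurableSet
  rw [tsum_congr hSi, tsum_fintype, Finset.sum_const, Finset.card_univ, Fintype.card_fin,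
    nsmul_eq_mul]
  norm_num

-- FTC real computation
lemma ftc_formula (hα : 0 < α) {s a : ℝ} (hs1 : 1 < s) (ha : a = s^2) {m : ℕ} (hm : 1 ≤ m) :
    (1 - s^(-α))^m * a^(-α)
      + ∫ x in s..a, α * x^(-α-1) * ((1 - s^(-α))^m - (1 - (a/x)^(-α))^m)
    = m * a^(-α) * ∫ x in s..a, α * (1 - x^α/a^α)^(m-1) / x := by
  have hs0 : 0 < s := lt_trans one_pos hs1
  have hsa : s < a := by nlinarith
  have ha0 : 0 < a := lt_trans hs0 hsa
  have huIcc : uIcc s a = Icc s a := uIcc_of_le hsa.le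
  have hpos : ∀ x ∈ uIcc s a, 0 < x := by
    rw [huIcc]; exact fun x hx => lt_of_lt_of_le hs0 hx.1
  -- rewrite (a/x)^(-α) as x^α/a^α inside the integral
  have hcongr : ∀ x ∈ uIcc s a,
      α * x^(-α-1) * ((1 - s^(-α))^m - (1 - (a/x)^(-α))^m)
      = α * x^(-α-1) * ((1 - s^(-α))^m - (1 - x^α/a^α)^m) := by
    intro x hx
    have hx0 : 0 < x := hpos x hx
    have : (a/x) ^ (-α) = x^α / a^α := by
      rw [Real.rpow_neg (div_pos ha0 hx0).le, Real.div_rpow ha0.le hx0.le, inv_div]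
    rw [this]
  rw [intervalIntegral.integral_congr hcongr]
  -- continuity facts
  have hc1 : ContinuousOn (fun x : ℝ => α * x^(-α-1)) (uIcc s a) :=
    continuousOn_const.mul (continuousOn_id.rpow_const fun x hx => Or.inl (hpos x hx).ne')
  have hc2 : ContinuousOn (fun x : ℝ => (1 - x^α/a^α)^m) (uIcc s a) :=
    ((continuousOn_const.sub ((continuousOn_id.rpow_const
      fun x hx => Or.inl (hpos x hx).ne').div_const _)).pow m)
  have hc3 : ContinuousOn (fun x : ℝ => (1 - x^α/a^α)^(m-1)) (uIcc s a) :=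
    ((continuousOn_const.sub ((continuousOn_id.rpow_const
      fun x hx => Or.inl (hpos x hx).ne').div_const _)).pow (m-1))
  have hi1 : IntervalIntegrable (fun x : ℝ => α * x^(-α-1)) volume s a :=
    hc1.intervalIntegrable
  have hi2 : IntervalIntegrable (fun x : ℝ => α * x^(-α-1) * (1 - x^α/a^α)^m) volume s a :=
    (hc1.mul hc2).intervalIntegrable
  have hi3 : IntervalIntegrable (fun x : ℝ => m * a^(-α) * (α * (1 - x^α/a^α)^(m-1) / x))
      volume s a := by
    apply ContinuousOn.intervalIntegrable
    exact continuousOn_const.mul ((continuousOn_const.mul hc3).div continuousOn_id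
      fun x hx => (hpos x hx).ne')
  -- split the integral
  have esplit : ∫ x in s..a, α * x^(-α-1) * ((1 - s^(-α))^m - (1 - x^α/a^α)^m)
      = (1 - s^(-α))^m * (∫ x in s..a, α * x^(-α-1))
        - ∫ x in s..a, α * x^(-α-1) * (1 - x^α/a^α)^m := by
    have h := intervalIntegral.integral_sub (hi1.const_mul ((1 - s^(-α))^m)) hi2
    rw [intervalIntegral.integral_const_mul] at h
    rw [← h]
    apply intervalIntegral.integral_congr
    intro x hx
    simp only
    ring
  -- e1 : ∫ α x^{-α-1} = s^{-α} - a^{-α}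
  have e1 : ∫ x in s..a, α * x^(-α-1) = s^(-α) - a^(-α) := by
    have hderiv : ∀ x ∈ uIcc s a,
        HasDerivAt (fun y : ℝ => -(y^(-α))) (α * x^(-α-1)) x := by
      intro x hx
      have h := (Real.hasDerivAt_rpow_const (p := -α) (Or.inl (hpos x hx).ne')).fun_neg
      refine h.congr_deriv ?_
      try ring
    rw [intervalIntegral.integral_eq_sub_of_hasDerivAt hderiv hi1]
    ring
  -- e2 via combined FTC
  have e2 : (∫ x in s..a, α * x^(-α-1) * (1 - x^α/a^α)^m)
      + ∫ x in s..a, m * a^(-α) * (α * (1 - x^α/a^α)^(m-1) / x)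
      = s^(-α) * (1 - s^α/a^α)^m := by
    have hderiv : ∀ x ∈ uIcc s a,
        HasDerivAt (fun y : ℝ => -(y^(-α) * (1 - y^α/a^α)^m))
          (α * x^(-α-1) * (1 - x^α/a^α)^m
            + m * a^(-α) * (α * (1 - x^α/a^α)^(m-1) / x)) x := by
      intro x hx
      have hx0 : 0 < x := hpos x hx
      have h1 : HasDerivAt (fun y : ℝ => y^(-α)) (-α * x^(-α-1)) x := by
        have := Real.hasDerivAt_rpow_const (p := -α) (Or.inl hx0.ne')
        convert this using 1
        try ring
      have h2 : HasDerivAt (fun y : ℝ => 1 - y^α/a^α) (-(α * x^(α-1)/a^α)) x := by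
        have := ((Real.hasDerivAt_rpow_const (p := α) (Or.inl hx0.ne')).div_const
          (a^α)).const_sub 1
        convert this using 1
        try ring
      have h3 : HasDerivAt (fun y : ℝ => (1 - y^α/a^α)^m)
          ((m : ℝ) * (1 - x^α/a^α)^(m-1) * (-(α * x^(α-1)/a^α))) x := h2.pow m
      have h4 := (h1.fun_mul h3).fun_neg
      refine h4.congr_deriv ?_
      have haa : a^(-α) = (a^α)⁻¹ := Real.rpow_neg ha0.le α
      have k1 : x^(-α-1) = (x^α * x)⁻¹ := by
        rw [show -α-1 = -(α+1) by ring, Real.rpow_neg hx0.le, Real.rpow_add hx0,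
          Real.rpow_one]
      have k2 : x^(α-1) = x^α * x⁻¹ := by
        rw [show α-1 = α + (-1) by ring, Real.rpow_add hx0, Real.rpow_neg_one]
      have k3 : x^(-α) = (x^α)⁻¹ := Real.rpow_neg hx0.le α
      have hax : (0:ℝ) < x^α := Real.rpow_pos_of_pos hx0 α
      have haa' : (0:ℝ) < a^α := Real.rpow_pos_of_pos ha0 α
      rw [haa, k1, k2, k3]
      field_simp
      ring
    have := intervalIntegral.integral_eq_sub_of_hasDerivAt hderiv (hi2.add hi3)
    rw [intervalIntegral.integral_add hi2 hi3] at this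
    rw [this]
    rw [div_self (Real.rpow_pos_of_pos ha0 α).ne', sub_self, zero_pow (by omega : m ≠ 0)]
    ring
  -- s^α/a^α = s^(-α)
  have hsq : s^α/a^α = s^(-α) := by
    have h1 : a^α = s^α * s^α := by
      rw [ha, sq, Real.mul_rpow hs0.le hs0.le]
    rw [h1, Real.rpow_neg hs0.le]
    have h2 : (0:ℝ) < s^α := Real.rpow_pos_of_pos hs0 α
    field_simp
  rw [esplit, e1]
  have e3 : ∫ x in s..a, m * a^(-α) * (α * (1 - x^α/a^α)^(m-1) / x)
      = m * a^(-α) * ∫ x in s..a, α * (1 - x^α/a^α)^(m-1) / x := by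
    rw [← intervalIntegral.integral_const_mul]
  rw [hsq] at e2
  rw [e3] at e2
  linear_combination -e2

end Assemble

section Bounds
variable {α : ℝ}

lemma int_const_div (α : ℝ) {u v : ℝ} (hu : 0 < u) (huv : u ≤ v) :
    ∫ x in u..v, α / x = α * (log v - log u) := by
  have h0 : (0:ℝ) ∉ uIcc u v := by
    rw [uIcc_of_le huv]
    rintro ⟨h1, -⟩
    exact absurd h1 (not_le.mpr hu)
  have hcongr : ∀ x ∈ uIcc u v, α / x = α * (1/x) := fun x _ => by ring
  rw [intervalIntegral.integral_congr hcongr, intervalIntegral.integral_const_mul,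
    integral_one_div h0, log_div (ne_of_gt (lt_of_lt_of_le hu huv)) (ne_of_gt hu)]

lemma cont_J (α : ℝ) (a : ℝ) (p : ℕ) {u v : ℝ} (hu : 0 < u) :
    ContinuousOn (fun x : ℝ => α * (1 - x^α/a^α)^p / x) (Icc u v) := by
  apply ContinuousOn.div
  · exact continuousOn_const.mul ((continuousOn_const.sub
      ((continuousOn_id.rpow_const fun x hx => Or.inl (lt_of_lt_of_le hu hx.1).ne').div_const
        _)).pow p)
  · exact continuousOn_id
  · exact fun x hx => (lt_of_lt_of_le hu hx.1).ne'

lemma cont_div (α : ℝ) {u v : ℝ} (hu : 0 < u) :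
    ContinuousOn (fun x : ℝ => α / x) (Icc u v) :=
  continuousOn_const.div continuousOn_id fun x hx => (lt_of_lt_of_le hu hx.1).ne'

lemma J_lower (hα : 0 < α) {s b a : ℝ} (hs0 : 0 < s) (hsb : s ≤ b) (hba : b ≤ a) (p : ℕ) :
    (1 - p * (b^α/a^α)) * (α * (log b - log s))
      ≤ ∫ x in s..a, α * (1 - x^α/a^α)^p / x := by
  have hb0 : 0 < b := lt_of_lt_of_le hs0 hsb
  have ha0 : 0 < a := lt_of_lt_of_le hb0 hba
  have haα : (0:ℝ) < a^α := rpow_pos_of_pos ha0 α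
  have hi1 : IntervalIntegrable (fun x : ℝ => α * (1 - x^α/a^α)^p / x) volume s b :=
    ((cont_J α a p hs0).mono (by rw [uIcc_of_le hsb])).intervalIntegrable
  have hi2 : IntervalIntegrable (fun x : ℝ => α * (1 - x^α/a^α)^p / x) volume b a :=
    ((cont_J α a p hb0).mono (by rw [uIcc_of_le hba])).intervalIntegrable
  have hi3 : IntervalIntegrable (fun x : ℝ => (1 - p * (b^α/a^α)) * (α / x)) volume s b :=
    (((cont_div α hs0).mono (by rw [uIcc_of_le hsb])).intervalIntegrable).const_mul _
  rw [← intervalIntegral.integral_add_adjacent_intervals hi1 hi2]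
  have h2 : 0 ≤ ∫ x in b..a, α * (1 - x^α/a^α)^p / x := by
    apply intervalIntegral.integral_nonneg hba
    intro x hx
    have hx0 : 0 < x := lt_of_lt_of_le hb0 hx.1
    have hva : x^α ≤ a^α := rpow_le_rpow hx0.le hx.2 hα.le
    have : (0:ℝ) ≤ 1 - x^α/a^α := by
      rw [sub_nonneg, div_le_one haα]; exact hva
    positivity
  have h1 : ∫ x in s..b, (1 - p * (b^α/a^α)) * (α / x)
      ≤ ∫ x in s..b, α * (1 - x^α/a^α)^p / x := by
    apply intervalIntegral.integral_mono_on hsb hi3 hi1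
    intro x hx
    have hx0 : 0 < x := lt_of_lt_of_le hs0 hx.1
    have hxb : x^α ≤ b^α := rpow_le_rpow hx0.le hx.2 hα.le
    have hbaα : b^α ≤ a^α := rpow_le_rpow hb0.le hba hα.le
    have hv0 : (0:ℝ) ≤ x^α := (rpow_pos_of_pos hx0 α).le
    have hv2 : x^α/a^α ≤ 2 := by
      have : x^α/a^α ≤ 1 := by
        rw [div_le_one haα]; linarith
      linarith
    have hbern : 1 - (p:ℝ) * (x^α/a^α) ≤ (1 - x^α/a^α)^p := by
      have := one_add_mul_le_pow (a := -(x^α/a^α)) (by linarith) p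
      calc 1 - (p:ℝ) * (x^α/a^α) = 1 + p * (-(x^α/a^α)) := by ring
      _ ≤ (1 + -(x^α/a^α))^p := this
      _ = (1 - x^α/a^α)^p := by ring_nf
    have hmono : 1 - (p:ℝ) * (b^α/a^α) ≤ 1 - (p:ℝ) * (x^α/a^α) := by
      have : (p:ℝ) * (x^α/a^α) ≤ (p:ℝ) * (b^α/a^α) := by
        apply mul_le_mul_of_nonneg_left _ (Nat.cast_nonneg p)
        gcongr
      linarith
    have hrw : α * (1 - x^α/a^α)^p / x = (1 - x^α/a^α)^p * (α / x) := by ring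
    rw [hrw]
    have hαx : 0 ≤ α / x := by positivity
    calc (1 - (p:ℝ) * (b^α/a^α)) * (α / x) ≤ (1 - (p:ℝ) * (x^α/a^α)) * (α/x) :=
          mul_le_mul_of_nonneg_right hmono hαx
    _ ≤ (1 - x^α/a^α)^p * (α/x) := mul_le_mul_of_nonneg_right hbern hαx
  calc (1 - (p:ℝ) * (b^α/a^α)) * (α * (log b - log s))
      = ∫ x in s..b, (1 - (p:ℝ) * (b^α/a^α)) * (α / x) := by
        rw [intervalIntegral.integral_const_mul, int_const_div α hs0 hsb]
  _ ≤ ∫ x in s..b, α * (1 - x^α/a^α)^p / x := h1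
  _ ≤ _ := by linarith

lemma J_upper (hα : 0 < α) {s c a : ℝ} (hs0 : 0 < s) (hsc : s ≤ c) (hca : c ≤ a) (p : ℕ) :
    ∫ x in s..a, α * (1 - x^α/a^α)^p / x
    ≤ α * (log c - log s) + (1 - c^α/a^α)^p * (α * (log a - log c)) := by
  have hc0 : 0 < c := lt_of_lt_of_le hs0 hsc
  have ha0 : 0 < a := lt_of_lt_of_le hc0 hca
  have haα : (0:ℝ) < a^α := rpow_pos_of_pos ha0 α
  have hcaα : c^α ≤ a^α := rpow_le_rpow hc0.le hca hα.le
  have hi1 : IntervalIntegrable (fun x : ℝ => α * (1 - x^α/a^α)^p / x) volume s c :=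
    ((cont_J α a p hs0).mono (by rw [uIcc_of_le hsc])).intervalIntegrable
  have hi2 : IntervalIntegrable (fun x : ℝ => α * (1 - x^α/a^α)^p / x) volume c a :=
    ((cont_J α a p hc0).mono (by rw [uIcc_of_le hca])).intervalIntegrable
  have hi3 : IntervalIntegrable (fun x : ℝ => α / x) volume s c :=
    ((cont_div α hs0).mono (by rw [uIcc_of_le hsc])).intervalIntegrable
  have hi4 : IntervalIntegrable (fun x : ℝ => (1 - c^α/a^α)^p * (α / x)) volume c a :=
    (((cont_div α hc0).mono (by rw [uIcc_of_le hca])).intervalIntegrable).const_mul _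
  rw [← intervalIntegral.integral_add_adjacent_intervals hi1 hi2]
  have h1 : ∫ x in s..c, α * (1 - x^α/a^α)^p / x ≤ α * (log c - log s) := by
    rw [← int_const_div α hs0 hsc]
    apply intervalIntegral.integral_mono_on hsc hi1 hi3
    intro x hx
    have hx0 : 0 < x := lt_of_lt_of_le hs0 hx.1
    have hxa : x^α ≤ a^α := rpow_le_rpow hx0.le (le_trans hx.2 hca) hα.le
    have h01 : (0:ℝ) ≤ 1 - x^α/a^α := by
      rw [sub_nonneg, div_le_one haα]; exact hxa
    have h11 : 1 - x^α/a^α ≤ 1 := by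
      have : (0:ℝ) ≤ x^α/a^α := by positivity
      linarith
    have : (1 - x^α/a^α)^p ≤ 1 := pow_le_one₀ h01 h11
    have hrw : α * (1 - x^α/a^α)^p / x = (1 - x^α/a^α)^p * (α / x) := by ring
    rw [hrw]
    calc (1 - x^α/a^α)^p * (α / x) ≤ 1 * (α/x) :=
          mul_le_mul_of_nonneg_right this (by positivity)
    _ = α / x := one_mul _
  have h2 : ∫ x in c..a, α * (1 - x^α/a^α)^p / x
      ≤ (1 - c^α/a^α)^p * (α * (log a - log c)) := by
    rw [← int_const_div α hc0 hca, ← intervalIntegral.integral_const_mul]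
    apply intervalIntegral.integral_mono_on hca hi2 hi4
    intro x hx
    have hx0 : 0 < x := lt_of_lt_of_le hc0 hx.1
    have hxa : x^α ≤ a^α := rpow_le_rpow hx0.le hx.2 hα.le
    have hcx : c^α ≤ x^α := rpow_le_rpow hc0.le hx.1 hα.le
    have h01 : (0:ℝ) ≤ 1 - x^α/a^α := by
      rw [sub_nonneg, div_le_one haα]; exact hxa
    have hmono : (1 - x^α/a^α)^p ≤ (1 - c^α/a^α)^p := by
      apply pow_le_pow_left₀ h01
      have : c^α/a^α ≤ x^α/a^α := by gcongr -- div mono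
      linarith
    have hrw : α * (1 - x^α/a^α)^p / x = (1 - x^α/a^α)^p * (α / x) := by ring
    rw [hrw]
    exact mul_le_mul_of_nonneg_right hmono (by positivity)
  linarith

end Bounds

section Limit
variable {α γ : ℝ}

set_option maxHeartbeats 1000000 in
lemma J_tendsto (hα : 0 < α) (hγ : 2 < γ) :
    Tendsto (fun n : ℕ =>
      (∫ x in (Real.sqrt (aSeq α γ n))..(aSeq α γ n),
        α * (1 - x^α/(aSeq α γ n)^α)^(n-2) / x) / Real.log n) atTop (𝓝 (γ/2 - 1)) := by
  have hlogtop : Tendsto (fun n : ℕ => Real.log n) atTop atTop :=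
    Real.tendsto_log_atTop.comp tendsto_natCast_atTop_atTop
  have hLltop : Tendsto (fun n : ℕ => Real.log (Real.log n) / Real.log n) atTop (𝓝 0) := by
    have h2 : Tendsto (fun x : ℝ => Real.log x / x) atTop (𝓝 0) := by
      simpa using Real.isLittleO_log_id_atTop.tendsto_div_nhds_zero
    exact h2.comp hlogtop
  set low : ℕ → ℝ := fun n =>
    (1 - 1/(Real.log n)) * ((γ/2 - 1) - (Real.log (Real.log n) / Real.log n)/2) with hlowdef
  set up : ℕ → ℝ := fun n =>
    (γ/2 - 1) + (3/2) * (Real.log (Real.log n) / Real.log n) + Real.exp (-(Real.log n)/2)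
    with hupdef
  have hlowlim : Tendsto low atTop (𝓝 (γ/2 - 1)) := by
    have h1 : Tendsto (fun n : ℕ => 1 - 1/(Real.log n)) atTop (𝓝 1) := by
      have h2 : Tendsto (fun n : ℕ => 1 - (Real.log n)⁻¹) atTop (𝓝 (1 - 0)) :=
        tendsto_const_nhds.sub hlogtop.inv_tendsto_atTop
      simpa [one_div] using h2
    have h2 : Tendsto (fun n : ℕ => (γ/2 - 1) - (Real.log (Real.log n) / Real.log n)/2)
        atTop (𝓝 ((γ/2 - 1) - 0/2)) :=
      tendsto_const_nhds.sub (hLltop.div_const 2)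
    have h3 := h1.mul h2
    norm_num at h3
    rw [hlowdef]
    simpa [one_div] using h3
  have huplim : Tendsto up atTop (𝓝 (γ/2 - 1)) := by
    have hexp : Tendsto (fun n : ℕ => Real.exp (-(Real.log n)/2)) atTop (𝓝 0) := by
      have h2 : Tendsto (fun n : ℕ => -(Real.log n)/2) atTop atBot :=
        (tendsto_neg_atTop_atBot.comp hlogtop).atBot_div_const (by norm_num)
      exact Real.tendsto_exp_atBot.comp h2
    have h3 : Tendsto (fun n : ℕ => (γ/2 - 1) + (3/2) * (Real.log (Real.log n) / Real.log n)
        + Real.exp (-(Real.log n)/2)) atTop (𝓝 ((γ/2 - 1) + (3/2) * 0 + 0)) :=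
      (tendsto_const_nhds.add (hLltop.const_mul (3/2 : ℝ))).add hexp
    norm_num at h3
    rw [hupdef]
    simpa using h3
  have hbound : ∀ᶠ n : ℕ in atTop, low n ≤
      (∫ x in (Real.sqrt (aSeq α γ n))..(aSeq α γ n),
        α * (1 - x^α/(aSeq α γ n)^α)^(n-2) / x) / Real.log n ∧
      (∫ x in (Real.sqrt (aSeq α γ n))..(aSeq α γ n),
        α * (1 - x^α/(aSeq α γ n)^α)^(n-2) / x) / Real.log n ≤ up n := by
    have e1 : ∀ᶠ n : ℕ in atTop, (4:ℕ) ≤ n := eventually_ge_atTop 4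
    have e2 : ∀ᶠ n : ℕ in atTop, 1 < Real.log n := hlogtop.eventually_gt_atTop 1
    have e3 : ∀ᶠ n : ℕ in atTop, Real.log (Real.log n) / Real.log n ≤ γ - 2 := by
      have h4 := hLltop.eventually (Iio_mem_nhds (show (0:ℝ) < γ - 2 by linarith))
      filter_upwards [h4] with n hn
      exact le_of_lt hn
    filter_upwards [e1, e2, e3] with n hn4 hl1 hLg
    set N : ℝ := (n : ℝ) with hNdef
    set l : ℝ := Real.log N with hldef
    set L : ℝ := Real.log l with hLdef
    have hN4 : (4:ℝ) ≤ N := by rw [hNdef]; exact_mod_cast hn4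
    have hN0 : 0 < N := by linarith
    have hl0 : 0 < l := by linarith
    have hL0 : 0 ≤ L := log_nonneg hl1.le
    have hLl : L ≤ (γ - 2) * l := by
      have h5 := (div_le_iff₀ hl0).mp hLg
      linarith
    have hLl2 : L ≤ l := by
      have h5 := log_le_sub_one_of_pos hl0
      linarith
    have hcmp : ∀ {x y : ℝ}, 0 < x → 0 < y → α * Real.log x ≤ α * Real.log y → x ≤ y := by
      intro x y hx hy h
      have h2 := le_of_mul_le_mul_left h hα
      calc x = Real.exp (Real.log x) := (exp_log hx).symm
      _ ≤ Real.exp (Real.log y) := exp_le_exp.mpr h2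
      _ = y := exp_log hy
    have hpowinv : ∀ {X : ℝ}, 0 < X → (X^(1/α))^α = X := by
      intro X hX
      rw [← Real.rpow_mul hX.le, one_div, inv_mul_cancel₀ hα.ne', Real.rpow_one]
    have hlogpow : ∀ {X : ℝ}, 0 < X → α * Real.log (X^(1/α)) = Real.log X := by
      intro X hX
      rw [Real.log_rpow hX]
      field_simp
    set A : ℝ := N^γ * l with hAdef
    have hNγ : 1 < N^γ :=
      (Real.one_lt_rpow_iff_of_pos hN0).mpr (Or.inl ⟨by linarith, by linarith⟩)
    have hA0 : 0 < A := mul_pos (by positivity) hl0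
    have hA1 : 1 < A := by rw [hAdef]; nlinarith only [hNγ, hl1]
    have hlogA : Real.log A = γ * l + L := by
      rw [hAdef, log_mul (by positivity) hl0.ne', log_rpow hN0]
    have haeq : aSeq α γ n = A^(1/α) := rfl
    have ha0 : 0 < aSeq α γ n := by rw [haeq]; positivity
    have haα : (aSeq α γ n)^α = A := by rw [haeq]; exact hpowinv hA0
    have hloga : α * Real.log (aSeq α γ n) = γ * l + L := by
      rw [haeq, hlogpow hA0, hlogA]
    set s : ℝ := Real.sqrt (aSeq α γ n) with hsdef
    have hs0 : 0 < s := sqrt_pos.mpr ha0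
    have hlogs : α * Real.log s = (γ * l + L)/2 := by
      rw [hsdef, log_sqrt ha0.le]
      linarith [hloga]
    set b : ℝ := (A / (N * l))^(1/α) with hbdef
    have hNl0 : 0 < N * l := mul_pos hN0 hl0
    have hb0 : 0 < b := by rw [hbdef]; positivity
    have hbα : b^α = A / (N * l) := by rw [hbdef]; exact hpowinv (div_pos hA0 hNl0)
    have hlogb : α * Real.log b = (γ - 1) * l := by
      rw [hbdef, hlogpow (div_pos hA0 hNl0), log_div hA0.ne' hNl0.ne',
        log_mul hN0.ne' hl0.ne', hlogA, ← hldef, ← hLdef]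
      ring
    set c : ℝ := (A * l / N)^(1/α) with hcdef
    have hAl0 : 0 < A * l := mul_pos hA0 hl0
    have hc0 : 0 < c := by rw [hcdef]; positivity
    have hcα : c^α = A * l / N := by rw [hcdef]; exact hpowinv (div_pos hAl0 hN0)
    have hlogc : α * Real.log c = (γ - 1) * l + 2 * L := by
      rw [hcdef, hlogpow (div_pos hAl0 hN0), log_div hAl0.ne' hN0.ne',
        log_mul hA0.ne' hl0.ne', hlogA, ← hldef, ← hLdef]
      ring
    have hsb : s ≤ b := hcmp hs0 hb0 (by rw [hlogs, hlogb]; linarith)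
    have hbc : b ≤ c := hcmp hb0 hc0 (by rw [hlogb, hlogc]; linarith)
    have hca : c ≤ aSeq α γ n := hcmp hc0 ha0 (by rw [hlogc, hloga]; linarith)
    have hsc : s ≤ c := hsb.trans hbc
    have hba : b ≤ aSeq α γ n := hbc.trans hca
    have hp : ((n - 2 : ℕ) : ℝ) = N - 2 := by
      rw [hNdef, Nat.cast_sub (by omega)]
      norm_num
    have hlogn : Real.log (n:ℝ) = l := by
      rw [hldef, hNdef]
    clear_value c b s A L l N
    constructor
    · -- lower bound
      have hJlow := J_lower hα hs0 hsb hba (n-2)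
      have hval : α * (Real.log b - Real.log s) = (γ - 1) * l - (γ * l + L)/2 := by
        rw [mul_sub]
        linarith [hlogb, hlogs]
      have hratio : ((n - 2 : ℕ) : ℝ) * (b^α/(aSeq α γ n)^α) = (N - 2)/(N * l) := by
        rw [hp, hbα, haα]
        field_simp
      rw [hval, hratio] at hJlow
      have hfac2 : 0 ≤ (γ - 1) * l - (γ * l + L)/2 := by linarith only [hLl]
      have hfac1 : 1 - 1/l ≤ 1 - (N - 2)/(N * l) := by
        have h6 : (N - 2)/(N * l) ≤ 1/l := by
          rw [div_le_div_iff₀ hNl0 hl0, one_mul]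
          exact mul_le_mul_of_nonneg_right (by linarith only [hN4]) hl0.le
        linarith only [h6]
      have hchain : (1 - 1/l) * ((γ - 1) * l - (γ * l + L)/2)
          ≤ ∫ x in s..(aSeq α γ n), α * (1 - x^α/(aSeq α γ n)^α)^(n-2) / x :=
        le_trans (mul_le_mul_of_nonneg_right hfac1 hfac2) hJlow
      rw [le_div_iff₀ hl0]
      have hexpand : low n * l = (1 - 1/l) * ((γ - 1) * l - (γ * l + L)/2) := by
        simp only [hlowdef]
        rw [hlogn, hLdef]
        field_simp
        ring
      rw [hexpand]
      exact hchain
    · -- upper bound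
      have hJup := J_upper hα hs0 hsc hca (n-2)
      have hval1 : α * (Real.log c - Real.log s) = (γ/2 - 1) * l + (3/2) * L := by
        rw [mul_sub]
        linarith [hlogc, hlogs]
      have hval2 : α * (Real.log (aSeq α γ n) - Real.log c) = l - L := by
        rw [mul_sub]
        linarith [hloga, hlogc]
      have hratio : c^α/(aSeq α γ n)^α = l/N := by
        rw [hcα, haα]
        field_simp
      rw [hval1, hval2, hratio] at hJup
      have hlN : l ≤ N := by
        have h5 := log_le_sub_one_of_pos hN0
        rw [← hldef] at h5
        linarith only [h5]
      have hbase0 : 0 ≤ 1 - l/N := by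
        rw [sub_nonneg, div_le_one hN0]
        exact hlN
      have hbase : 1 - l/N ≤ Real.exp (-(l/N)) := by
        have h5 := Real.add_one_le_exp (-(l/N))
        linarith only [h5]
      have htail : (1 - l/N)^(n-2) ≤ Real.exp (-l/2) := by
        calc (1 - l/N)^(n-2) ≤ (Real.exp (-(l/N)))^(n-2) :=
              pow_le_pow_left₀ hbase0 hbase _
        _ = Real.exp (((n-2 : ℕ) : ℝ) * (-(l/N))) := (Real.exp_nat_mul _ _).symm
        _ ≤ Real.exp (-l/2) := by
              apply Real.exp_le_exp.mpr
              rw [hp]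
              have h7 : (N - 2) * (-(l/N)) = -((N-2)*l/N) := by ring
              have h8 : -l/2 = -(l/2) := by ring
              rw [h7, h8, neg_le_neg_iff, div_le_div_iff₀ (by norm_num) hN0]
              have h9 : l * N ≤ l * (2*N - 4) :=
                mul_le_mul_of_nonneg_left (by linarith only [hN4]) hl0.le
              linarith only [h9]
      have htail2 : (1 - l/N)^(n-2) * (l - L) ≤ Real.exp (-l/2) * l := by
        calc (1 - l/N)^(n-2) * (l - L) ≤ Real.exp (-l/2) * (l - L) :=
              mul_le_mul_of_nonneg_right htail (by linarith only [hLl2])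
        _ ≤ Real.exp (-l/2) * l := by
              apply mul_le_mul_of_nonneg_left (by linarith only [hL0]) (Real.exp_nonneg _)
      rw [div_le_iff₀ hl0]
      have hexpand : up n * l = (γ/2 - 1) * l + (3/2) * L + Real.exp (-l/2) * l := by
        simp only [hupdef]
        rw [hlogn, hLdef]
        field_simp
      rw [hexpand]
      linarith only [hJup, htail2]
  exact tendsto_of_tendsto_of_tendsto_of_le_of_le' hlowlim huplim
    (hbound.mono fun n h => h.1) (hbound.mono fun n h => h.2)
end Limit

theorem stmt8 (α γ : ℝ) (hα : 0 < α) (hγ : 2 < γ) :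
    Tendsto (fun n : ℕ =>
      ((Measure.pi fun _ : Fin n => paretoMeasure α)
        {ω : Fin n → ℝ | ∃ i, ω i > Real.sqrt (aSeq α γ n) ∧
          (∀ k, ω k > Real.sqrt (aSeq α γ n) → k = i) ∧
          ∃ j, j ≠ i ∧ ω i * ω j > aSeq α γ n}).toReal
      / ((γ/2 - 1) * (n : ℝ) ^ (2 - γ))) atTop (nhds 1) := by
  have hγ2 : (0:ℝ) < γ/2 - 1 := by linarith
  have hlogtop : Tendsto (fun n : ℕ => Real.log n) atTop atTop :=
    Real.tendsto_log_atTop.comp tendsto_natCast_atTop_atTop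
  have hJ := J_tendsto (α := α) (γ := γ) hα hγ
  have h1 : Tendsto (fun n : ℕ => ((n:ℝ) - 1)/(n:ℝ)) atTop (𝓝 1) := by
    have h2 : Tendsto (fun n : ℕ => 1 - ((n:ℝ))⁻¹) atTop (𝓝 (1-0)) :=
      tendsto_const_nhds.sub (tendsto_natCast_atTop_atTop (R := ℝ)).inv_tendsto_atTop
    norm_num at h2
    apply Tendsto.congr' _ h2
    filter_upwards [eventually_ge_atTop 1] with n hn
    have hn0 : (0:ℝ) < n := by exact_mod_cast hn
    field_simp
  have hmain := h1.mul (hJ.div_const (γ/2 - 1))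
  rw [div_self hγ2.ne', mul_one] at hmain
  apply Tendsto.congr' _ hmain
  filter_upwards [eventually_ge_atTop 4, hlogtop.eventually_gt_atTop 1] with n hn4 hl1
  obtain ⟨m, rfl⟩ : ∃ m, n = m + 1 := ⟨n - 1, by omega⟩
  have hm : 1 ≤ m := by omega
  set a : ℝ := aSeq α γ (m+1) with hadef
  set s : ℝ := Real.sqrt a with hsdef
  set N : ℝ := ((m+1 : ℕ) : ℝ) with hNdef
  set L0 : ℝ := Real.log N with hL0def
  have hN4 : (4:ℝ) ≤ N := by rw [hNdef]; exact_mod_cast hn4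
  have hN0 : (0:ℝ) < N := by linarith
  have hL0pos : 0 < L0 := by linarith
  have hpowinv : ∀ {X : ℝ}, 0 < X → (X^(1/α))^α = X := by
    intro X hX
    rw [← Real.rpow_mul hX.le, one_div, inv_mul_cancel₀ hα.ne', Real.rpow_one]
  have hNγ : 1 < N^γ :=
    (Real.one_lt_rpow_iff_of_pos hN0).mpr (Or.inl ⟨by linarith, by linarith⟩)
  have hNγ0 : 0 < N^γ := by positivity
  have hA0 : 0 < N^γ * L0 := by positivity
  have haeq : a = (N^γ * L0)^(1/α) := rfl
  have ha0 : 0 < a := by rw [haeq]; positivity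
  have ha1 : 1 < a := by
    rw [haeq]
    exact (Real.one_lt_rpow_iff_of_pos hA0).mpr
      (Or.inl ⟨by nlinarith only [hNγ, hl1, hL0pos], by positivity⟩)
  have haα : a^α = N^γ * L0 := by rw [haeq]; exact hpowinv hA0
  have hs1 : 1 < s := by
    rw [hsdef]
    rw [show (1:ℝ) = Real.sqrt 1 from (Real.sqrt_one).symm]
    exact Real.sqrt_lt_sqrt (by norm_num) ha1
  have ha : a = s^2 := (Real.sq_sqrt ha0.le).symm
  have hs0 : 0 < s := by linarith
  have hsa : s < a := by nlinarith only [hs1, ha]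
  -- measure computation
  have hmeas := measure_event (α := α) hα hs1 ha hm
  have hftc := ftc_formula (α := α) hα hs1 ha hm
  set J : ℝ := ∫ x in s..a, α * (1 - x^α/a^α)^(m-1) / x with hJdef
  have hJnn : 0 ≤ J := by
    rw [hJdef]
    apply intervalIntegral.integral_nonneg hsa.le
    intro x hx
    have hx0 : 0 < x := lt_of_lt_of_le hs0 hx.1
    have hxa : x^α ≤ a^α := rpow_le_rpow hx0.le hx.2 hα.le
    have h01 : (0:ℝ) ≤ 1 - x^α/a^α := by
      rw [sub_nonneg, div_le_one (rpow_pos_of_pos ha0 α)]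
      exact hxa
    positivity
  have hXnn : 0 ≤ (1 - s^(-α))^m * a^(-α)
      + ∫ x in s..a, α * x^(-α-1) * ((1 - s^(-α))^m - (1 - (a/x)^(-α))^m) := by
    rw [hftc]
    have : (0:ℝ) ≤ a^(-α) := (rpow_pos_of_pos ha0 _).le
    positivity
  have htoReal : ((Measure.pi fun _ : Fin (m+1) => paretoMeasure α)
      {ω : Fin (m+1) → ℝ | ∃ i, ω i > s ∧ (∀ k, ω k > s → k = i) ∧
        ∃ j, j ≠ i ∧ ω i * ω j > a}).toReal
      = ((m:ℝ)+1) * ((m:ℝ) * a^(-α) * J) := by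
    rw [hmeas, ENNReal.toReal_mul, ENNReal.toReal_ofReal hXnn, hftc]
    have : ((m:ENNReal) + 1).toReal = (m:ℝ) + 1 := by
      rw [ENNReal.toReal_add (ENNReal.natCast_ne_top m) ENNReal.one_ne_top,
        ENNReal.toReal_natCast, ENNReal.toReal_one]
    rw [this]
  rw [htoReal]
  -- algebraic identity
  have hmcast : ((m+1 : ℕ) : ℝ) = (m:ℝ) + 1 := by push_cast; ring
  have hexp : m + 1 - 2 = m - 1 := by omega
  have hanegα : a^(-α) = (a^α)⁻¹ := Real.rpow_neg ha0.le α
  have hPQ : N^γ * N^(2-γ) = N^2 := by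
    rw [← Real.rpow_add hN0, show γ + (2-γ) = ((2:ℕ):ℝ) by push_cast; ring,
      Real.rpow_natCast]
  have hQ0 : 0 < N^(2-γ) := rpow_pos_of_pos hN0 _
  have hQeq : N^(2-γ) = N^2 / N^γ := by
    rw [eq_div_iff hNγ0.ne', mul_comm]
    exact hPQ
  -- put goal in terms of N, L0, J
  have hm1 : (m:ℝ) = N - 1 := by rw [hNdef]; push_cast; ring
  rw [hexp, ← hJdef, hanegα, haα, hm1]
  have hL : (N - 1)/N * (J / L0 / (γ/2 - 1)) = ((N-1)*J)/(N*(L0*(γ/2-1))) := by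
    field_simp [hN0.ne', hL0pos.ne', hγ2.ne']
  have hR : (N - 1 + 1) * ((N-1) * (N^γ*L0)⁻¹ * J) / ((γ/2-1) * N^(2-γ))
      = (N*(N-1)*J)/((N^γ*L0)*((γ/2-1)*N^(2-γ))) := by
    field_simp [hN0.ne', hL0pos.ne', hγ2.ne', hNγ0.ne', hQ0.ne']
    ring
  rw [hL, hR, div_eq_div_iff (mul_pos hN0 (mul_pos hL0pos hγ2)).ne'
    (mul_pos (mul_pos hNγ0 hL0pos) (mul_pos hγ2 hQ0)).ne']
  linear_combination ((N-1)*J*L0*(γ/2-1)) * hPQ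
end

section
/- Let F̄(x) = x^{-α} L(x) with L slowly varying, and let a_n* satisfy n F̄(√a_n*) → 1. If E X_1^α = ∞ (where X_1 has tail F̄), then F̄(x) = o(F̄_2(x)) as x → ∞, where F̄_2(x) = P(X_1 X_2 > x) for independent copies X_1, X_2; consequently a_n* = o(a_{2,n}*), where n F̄_2(√a_{2,n}*) → 1. -/
open MeasureTheory Filter Real Set

def SlowlyVarying (L : ℝ → ℝ) : Prop :=
  ∀ c > (0 : ℝ), Tendsto (fun x => L (c * x) / L x) atTop (nhds 1)

open scoped ENNReal


lemma ae_nonneg' (μ : Measure ℝ) (hnonneg : μ {t : ℝ | t < 0} = 0) : ∀ᵐ t ∂μ, 0 ≤ t := by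
  rw [ae_iff]
  convert hnonneg using 2
  ext t; simp

lemma tail_pos (α : ℝ) (hα : 0 < α) (μ : Measure ℝ) [IsProbabilityMeasure μ]
    (hnonneg : μ {t : ℝ | t < 0} = 0)
    (hmoment : ∫⁻ x, ENNReal.ofReal (x ^ α) ∂μ = ⊤) (x : ℝ) :
    0 < μ {t : ℝ | t > x} := by
  by_contra h
  push_neg at h
  have h0 : μ {t : ℝ | t > x} = 0 := le_antisymm h zero_le
  have hb : ∀ᵐ t ∂μ, t ≤ x := by
    rw [ae_iff]; convert h0 using 2; ext t; simp
  set M := max x 1 with hM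
  have hbd : ∀ᵐ t ∂μ, ENNReal.ofReal (t ^ α) ≤ ENNReal.ofReal (M ^ α) := by
    filter_upwards [ae_nonneg' μ hnonneg, hb] with t ht0 htx
    exact ENNReal.ofReal_le_ofReal
      (Real.rpow_le_rpow ht0 (htx.trans (le_max_left _ _)) hα.le)
  have hle : ∫⁻ t, ENNReal.ofReal (t ^ α) ∂μ ≤ ENNReal.ofReal (M ^ α) := by
    calc ∫⁻ t, ENNReal.ofReal (t ^ α) ∂μ ≤ ∫⁻ _, ENNReal.ofReal (M ^ α) ∂μ :=
          lintegral_mono_ae hbd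
      _ = ENNReal.ofReal (M ^ α) := by simp
  rw [hmoment, top_le_iff] at hle
  exact ENNReal.ofReal_ne_top hle


lemma meas_prodset (y : ℝ) : MeasurableSet {p : ℝ × ℝ | p.1 * p.2 > y} :=
  (measurable_fst.mul measurable_snd) measurableSet_Ioi

lemma prod_tail_eq (μ : Measure ℝ) [SFinite μ] (y : ℝ) :
    (μ.prod μ) {p : ℝ × ℝ | p.1 * p.2 > y} = ∫⁻ s, μ {t : ℝ | s * t > y} ∂μ :=
  Measure.prod_apply (meas_prodset y)

lemma prod_tail_ge_rect (μ : Measure ℝ) [SFinite μ] (x c : ℝ) (hx : 0 < x) (hc : 0 < c) :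
    μ {t : ℝ | t > x / c} * μ {t : ℝ | t > c} ≤ (μ.prod μ) {p : ℝ × ℝ | p.1 * p.2 > x} := by
  rw [← Measure.prod_prod]
  apply measure_mono
  rintro ⟨t, s⟩ ⟨ht, hs⟩
  simp only [mem_setOf_eq, mem_prod] at *
  have hxc : 0 < x / c := div_pos hx hc
  calc x = (x / c) * c := by field_simp
    _ < t * s := by
      apply mul_lt_mul' ht.le hs hc.le (hxc.trans ht)


lemma cover_Ioi : Ioi (1:ℝ) ⊆ ⋃ k : ℕ, Ioc ((2:ℝ)^k) ((2:ℝ)^(k+1)) := by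
  intro t ht
  simp only [mem_Ioi] at ht
  have hex : ∃ n : ℕ, t ≤ 2 ^ (n + 1) := by
    obtain ⟨n, hn⟩ := pow_unbounded_of_one_lt t (one_lt_two (α := ℝ))
    exact ⟨n, hn.le.trans (pow_le_pow_right₀ one_le_two (Nat.le_succ n))⟩
  classical
  let k := Nat.find hex
  have hk2 : t ≤ 2 ^ (k + 1) := Nat.find_spec hex
  have hk1 : (2:ℝ) ^ k < t := by
    rcases Nat.eq_zero_or_pos k with h0 | hpos
    · rw [h0]; simpa using ht
    · obtain ⟨k', hk'⟩ := Nat.exists_eq_succ_of_ne_zero hpos.ne'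
      have hmin := Nat.find_min hex (m := k') (by omega)
      push_neg at hmin
      calc (2:ℝ)^k = 2^(k'+1) := by rw [hk']
        _ < t := hmin
  exact mem_iUnion.2 ⟨k, hk1, hk2⟩




lemma sums_unbounded (α : ℝ) (hα : 0 < α) (μ : Measure ℝ) [IsProbabilityMeasure μ]
    (hnonneg : μ {t : ℝ | t < 0} = 0)
    (hmoment : ∫⁻ x, ENNReal.ofReal (x ^ α) ∂μ = ⊤) (C : ℝ) :
    ∃ N : ℕ, C ≤ ∑ k ∈ Finset.range N,
      ((2:ℝ)^k) ^ α * (μ (Ioc ((2:ℝ)^k) ((2:ℝ)^(k+1)))).toReal := by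
  set f : ℝ → ℝ≥0∞ := fun t => ENNReal.ofReal (t ^ α) with hf
  -- integral over Iic 1 is ≤ 1
  have h1 : ∫⁻ t in Iic 1, f t ∂μ ≤ 1 := by
    have hb : ∀ᵐ t ∂μ, t ∈ Iic (1:ℝ) → f t ≤ 1 := by
      filter_upwards [ae_nonneg' μ hnonneg] with t ht0 ht1
      simpa [hf] using ENNReal.ofReal_le_one.2 (Real.rpow_le_one ht0 ht1 hα.le)
    calc ∫⁻ t in Iic 1, f t ∂μ ≤ ∫⁻ _ in Iic 1, 1 ∂μ :=
          lintegral_mono_ae ((ae_restrict_iff' measurableSet_Iic).2 hb)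
      _ = μ (Iic 1) := by simp
      _ ≤ 1 := prob_le_one
  have hsplit : ∫⁻ t in Iic 1, f t ∂μ + ∫⁻ t in Ioi 1, f t ∂μ = ⊤ := by
    rw [← hmoment]
    rw [← lintegral_add_compl (f := f) (μ := μ) measurableSet_Iic]
    congr 1
    · congr 1
      simp [compl_Iic]
  -- hence integral over Ioi 1 is ⊤
  have h2 : ∫⁻ t in Ioi 1, f t ∂μ = ⊤ := by
    by_contra h
    exact (ENNReal.add_ne_top.2 ⟨(h1.trans_lt ENNReal.one_lt_top).ne, h⟩) hsplit
  -- bound by tsum over dyadic blocks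
  have h3 : (∫⁻ t in Ioi 1, f t ∂μ) ≤
      ∑' k : ℕ, ∫⁻ t in Ioc ((2:ℝ)^k) ((2:ℝ)^(k+1)), f t ∂μ := by
    calc ∫⁻ t in Ioi 1, f t ∂μ
        ≤ ∫⁻ t in ⋃ k : ℕ, Ioc ((2:ℝ)^k) ((2:ℝ)^(k+1)), f t ∂μ :=
          lintegral_mono' (Measure.restrict_mono cover_Ioi le_rfl) le_rfl
      _ ≤ ∑' k : ℕ, ∫⁻ t in Ioc ((2:ℝ)^k) ((2:ℝ)^(k+1)), f t ∂μ :=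
          lintegral_iUnion_le _ _
  have h4 : ∀ k : ℕ, ∫⁻ t in Ioc ((2:ℝ)^k) ((2:ℝ)^(k+1)), f t ∂μ ≤
      ENNReal.ofReal (((2:ℝ)^(k+1)) ^ α) * μ (Ioc ((2:ℝ)^k) ((2:ℝ)^(k+1))) := by
    intro k
    have hb : ∀ t ∈ Ioc ((2:ℝ)^k) ((2:ℝ)^(k+1)), f t ≤ ENNReal.ofReal (((2:ℝ)^(k+1)) ^ α) := by
      intro t ht
      have ht0 : (0:ℝ) ≤ t := le_of_lt (lt_of_le_of_lt (by positivity) ht.1)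
      exact ENNReal.ofReal_le_ofReal (Real.rpow_le_rpow ht0 ht.2 hα.le)
    calc ∫⁻ t in Ioc ((2:ℝ)^k) ((2:ℝ)^(k+1)), f t ∂μ
        ≤ ∫⁻ _ in Ioc ((2:ℝ)^k) ((2:ℝ)^(k+1)), ENNReal.ofReal (((2:ℝ)^(k+1)) ^ α) ∂μ :=
          setLIntegral_mono measurable_const hb
      _ = ENNReal.ofReal (((2:ℝ)^(k+1)) ^ α) * μ (Ioc ((2:ℝ)^k) ((2:ℝ)^(k+1))) := by
          simp [mul_comm]
  -- the weighted tsum is ⊤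
  have h5 : ∑' k : ℕ, ENNReal.ofReal (((2:ℝ)^(k+1)) ^ α) * μ (Ioc ((2:ℝ)^k) ((2:ℝ)^(k+1))) = ⊤ :=
    top_le_iff.mp (h2 ▸ h3.trans (ENNReal.tsum_le_tsum h4))
  set S : ℕ → ℝ≥0∞ := fun k => ENNReal.ofReal (((2:ℝ)^k) ^ α) * μ (Ioc ((2:ℝ)^k) ((2:ℝ)^(k+1)))
    with hS
  have h6 : ∑' k : ℕ, S k = ⊤ := by
    have hfac : ∀ k : ℕ, ENNReal.ofReal (((2:ℝ)^(k+1)) ^ α) * μ (Ioc ((2:ℝ)^k) ((2:ℝ)^(k+1)))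
        = ENNReal.ofReal ((2:ℝ) ^ α) * S k := by
      intro k
      have : ((2:ℝ)^(k+1)) ^ α = (2:ℝ) ^ α * ((2:ℝ)^k) ^ α := by
        rw [pow_succ, mul_comm ((2:ℝ)^k) 2, Real.mul_rpow (by norm_num) (by positivity)]
      rw [hS, this, ENNReal.ofReal_mul (by positivity), mul_assoc]
    rw [funext hfac] at h5
    rw [ENNReal.tsum_mul_left, ENNReal.mul_eq_top] at h5
    rcases h5 with ⟨_, h⟩ | ⟨h, _⟩
    · exact h
    · exact absurd h ENNReal.ofReal_ne_top
  have hSne : ∀ k, S k ≠ ⊤ := fun k =>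
    ENNReal.mul_ne_top ENNReal.ofReal_ne_top (measure_ne_top μ _)
  rw [ENNReal.tsum_eq_iSup_sum] at h6
  have h7 : ENNReal.ofReal C < ⨆ s : Finset ℕ, ∑ k ∈ s, S k := h6 ▸ ENNReal.ofReal_lt_top
  rw [lt_iSup_iff] at h7
  obtain ⟨s, hs⟩ := h7
  obtain ⟨N, hN⟩ := s.exists_nat_subset_range
  refine ⟨N, ?_⟩
  have hsum : ENNReal.ofReal C ≤ ∑ k ∈ Finset.range N, S k :=
    hs.le.trans (Finset.sum_le_sum_of_subset hN)
  have hne : ∑ k ∈ Finset.range N, S k ≠ ⊤ :=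
    (ENNReal.sum_lt_top.mpr (fun k _ => (hSne k).lt_top)).ne
  have := (ENNReal.ofReal_le_iff_le_toReal hne).mp hsum
  refine this.trans (le_of_eq ?_)
  rw [ENNReal.toReal_sum (fun k _ => hSne k)]
  refine Finset.sum_congr rfl fun k _ => ?_
  rw [hS, ENNReal.toReal_mul, ENNReal.toReal_ofReal (by positivity)]



section
variable (α : ℝ) (hα : 0 < α) (μ : Measure ℝ) [IsProbabilityMeasure μ]
    (L : ℝ → ℝ)

-- sum of disjoint rectangles lower bound
lemma prod_ge_sum [SFinite μ] (x : ℝ) (hx : 0 < x) (N : ℕ) :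
    ∑ k ∈ Finset.range N, μ {t : ℝ | t > x / 2^k} * μ (Ioc ((2:ℝ)^k) ((2:ℝ)^(k+1)))
      ≤ (μ.prod μ) {p : ℝ × ℝ | p.1 * p.2 > x} := by
  set R : ℕ → Set (ℝ × ℝ) := fun k => {t : ℝ | t > x / 2^k} ×ˢ Ioc ((2:ℝ)^k) ((2:ℝ)^(k+1))
    with hR
  have hmeas : ∀ k : ℕ, MeasurableSet (R k) := fun k =>
    (measurableSet_Ioi).prod measurableSet_Ioc
  have hdisj : (↑(Finset.range N) : Set ℕ).PairwiseDisjoint R := by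
    intro i _ j _ hij
    have hIoc : Disjoint (Ioc ((2:ℝ)^i) ((2:ℝ)^(i+1))) (Ioc ((2:ℝ)^j) ((2:ℝ)^(j+1))) := by
      rcases hij.lt_or_gt with h | h
      · exact Set.Ioc_disjoint_Ioc.2 (by
          simp only [min_le_iff, le_max_iff]
          exact Or.inr (Or.inl (pow_le_pow_right₀ (one_le_two : (1:ℝ) ≤ 2) h)))
      · exact Set.Ioc_disjoint_Ioc.2 (by
          simp only [min_le_iff, le_max_iff]
          exact Or.inl (Or.inr (pow_le_pow_right₀ (one_le_two : (1:ℝ) ≤ 2) h)))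
    exact Set.disjoint_prod.2 (Or.inr hIoc) |>.mono le_rfl le_rfl
  have hsub : ∀ k, R k ⊆ {p : ℝ × ℝ | p.1 * p.2 > x} := by
    rintro k ⟨t, s⟩ ⟨ht, hs⟩
    simp only [mem_setOf_eq] at *
    have h2k : (0:ℝ) < 2^k := by positivity
    have hxk : 0 < x / 2^k := div_pos hx h2k
    calc x = (x / 2^k) * 2^k := by field_simp
      _ < t * s := mul_lt_mul' ht.le hs.1 h2k.le (hxk.trans ht)
  calc ∑ k ∈ Finset.range N, μ {t : ℝ | t > x / 2^k} * μ (Ioc ((2:ℝ)^k) ((2:ℝ)^(k+1)))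
      = ∑ k ∈ Finset.range N, (μ.prod μ) (R k) := by
        refine Finset.sum_congr rfl fun k _ => ?_
        rw [hR]; exact (Measure.prod_prod _ _).symm
    _ = (μ.prod μ) (⋃ k ∈ Finset.range N, R k) :=
        (measure_biUnion_finset hdisj (fun k _ => hmeas k)).symm
    _ ≤ (μ.prod μ) {p : ℝ × ℝ | p.1 * p.2 > x} :=
        measure_mono (Set.iUnion₂_subset fun k _ => hsub k)
end







section
variable (α : ℝ) (hα : 0 < α) (μ : Measure ℝ) [IsProbabilityMeasure μ]
    (L : ℝ → ℝ) (hL : SlowlyVarying L)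
    (hnonneg : μ {t : ℝ | t < 0} = 0)
    (htail : ∀ x > (0 : ℝ), (μ {t : ℝ | t > x}).toReal = x ^ (-α) * L x)
    (hmoment : ∫⁻ x, ENNReal.ofReal (x ^ α) ∂μ = ⊤)

include hα hnonneg hmoment in
lemma Fb_pos (x : ℝ) : 0 < (μ {t : ℝ | t > x}).toReal :=
  ENNReal.toReal_pos (tail_pos α hα μ hnonneg hmoment x).ne' (measure_ne_top μ _)

include hα hnonneg htail hmoment in
lemma L_pos (x : ℝ) (hx : 0 < x) : 0 < L x := by
  have h := Fb_pos α hα μ hnonneg hmoment x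
  rw [htail x hx] at h
  have hxp : 0 < x ^ (-α) := Real.rpow_pos_of_pos hx _
  nlinarith

include hα hnonneg hmoment in
lemma F2_pos (x : ℝ) (hx : 0 < x) : 0 < ((μ.prod μ) {p : ℝ × ℝ | p.1 * p.2 > x}).toReal := by
  have h := prod_tail_ge_rect μ x 1 hx one_pos
  refine ENNReal.toReal_pos (fun h0 => ?_) (measure_ne_top _ _)
  rw [h0] at h
  exact absurd (le_antisymm h zero_le)
    (ENNReal.mul_pos (tail_pos α hα μ hnonneg hmoment _).ne'
      (tail_pos α hα μ hnonneg hmoment _).ne').ne'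

include hα hL hnonneg htail hmoment in
lemma ratio_tendsto_zero :
    Tendsto (fun x : ℝ => (μ {t : ℝ | t > x}).toReal
      / ((μ.prod μ) {p : ℝ × ℝ | p.1 * p.2 > x}).toReal) atTop (nhds 0) := by
  rw [Metric.tendsto_nhds]
  intro ε hε
  obtain ⟨N, hN⟩ := sums_unbounded α hα μ hnonneg hmoment (4/ε)
  have hev : ∀ᶠ x in atTop, ∀ k ∈ Finset.range N, 1/2 ≤ L (((2:ℝ)^k)⁻¹ * x) / L x := by
    rw [eventually_all_finset]
    intro k _
    exact (hL ((2:ℝ)^k)⁻¹ (by positivity)).eventually (eventually_ge_nhds (by norm_num))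
  filter_upwards [hev, eventually_ge_atTop (1:ℝ)] with x hx hx1
  have hx0 : (0:ℝ) < x := lt_of_lt_of_le one_pos hx1
  have hLx : 0 < L x := L_pos α hα μ L hnonneg htail hmoment x hx0
  have hFb : (μ {t : ℝ | t > x}).toReal = x ^ (-α) * L x := htail x hx0
  have hFbpos := Fb_pos α hα μ hnonneg hmoment x
  have hF2pos := F2_pos α hα μ hnonneg hmoment x hx0
  -- lower bound for F2
  have hA : ∑ k ∈ Finset.range N, (x / 2^k) ^ (-α) * L (x / 2^k)
        * (μ (Ioc ((2:ℝ)^k) ((2:ℝ)^(k+1)))).toReal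
      ≤ ((μ.prod μ) {p : ℝ × ℝ | p.1 * p.2 > x}).toReal := by
    have h := prod_ge_sum μ x hx0 N
    have hne : ∑ k ∈ Finset.range N, μ {t : ℝ | t > x / 2^k}
        * μ (Ioc ((2:ℝ)^k) ((2:ℝ)^(k+1))) ≠ ⊤ :=
      (ENNReal.sum_lt_top.mpr (fun k _ =>
        (ENNReal.mul_ne_top (measure_ne_top μ _) (measure_ne_top μ _)).lt_top)).ne
    have := (ENNReal.toReal_le_toReal hne (measure_ne_top _ _)).2 h
    refine le_trans (le_of_eq ?_) this
    rw [ENNReal.toReal_sum (fun k _ => ENNReal.mul_ne_top (measure_ne_top μ _) (measure_ne_top μ _))]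
    refine Finset.sum_congr rfl fun k _ => ?_
    rw [ENNReal.toReal_mul, htail (x / 2^k) (by positivity)]
  -- term-wise lower bound
  have hB : x ^ (-α) * (L x / 2) * (4/ε)
      ≤ ∑ k ∈ Finset.range N, (x / 2^k) ^ (-α) * L (x / 2^k)
        * (μ (Ioc ((2:ℝ)^k) ((2:ℝ)^(k+1)))).toReal := by
    have hterm : ∀ k ∈ Finset.range N,
        x ^ (-α) * (L x / 2) * (((2:ℝ)^k) ^ α * (μ (Ioc ((2:ℝ)^k) ((2:ℝ)^(k+1)))).toReal)
          ≤ (x / 2^k) ^ (-α) * L (x / 2^k)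
            * (μ (Ioc ((2:ℝ)^k) ((2:ℝ)^(k+1)))).toReal := by
      intro k hk
      have h2k : (0:ℝ) < 2^k := by positivity
      have hrw : (x / 2^k) ^ (-α) = x ^ (-α) * ((2:ℝ)^k) ^ α := by
        rw [Real.div_rpow hx0.le h2k.le, Real.rpow_neg h2k.le, div_eq_mul_inv, inv_inv]
      have hxx : x / 2^k = ((2:ℝ)^k)⁻¹ * x := by rw [div_eq_mul_inv, mul_comm]
      have hLk : L x / 2 ≤ L (x / 2^k) := by
        rw [hxx]
        have h := hx k hk
        rw [le_div_iff₀ hLx] at h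
        linarith
      set p := (μ (Ioc ((2:ℝ)^k) ((2:ℝ)^(k+1)))).toReal with hp
      have hp0 : 0 ≤ p := ENNReal.toReal_nonneg
      rw [hrw]
      calc x ^ (-α) * (L x / 2) * (((2:ℝ)^k) ^ α * p)
          = (x ^ (-α) * ((2:ℝ)^k) ^ α * p) * (L x / 2) := by ring
        _ ≤ (x ^ (-α) * ((2:ℝ)^k) ^ α * p) * L (x / 2^k) := by
            apply mul_le_mul_of_nonneg_left hLk
            have h1 : (0:ℝ) < x ^ (-α) := Real.rpow_pos_of_pos hx0 _
            have h2 : (0:ℝ) < ((2:ℝ)^k) ^ α := Real.rpow_pos_of_pos h2k _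
            positivity
        _ = x ^ (-α) * ((2:ℝ)^k) ^ α * L (x / 2^k) * p := by ring
    calc x ^ (-α) * (L x / 2) * (4/ε)
        ≤ x ^ (-α) * (L x / 2) * ∑ k ∈ Finset.range N,
            ((2:ℝ)^k) ^ α * (μ (Ioc ((2:ℝ)^k) ((2:ℝ)^(k+1)))).toReal := by
          apply mul_le_mul_of_nonneg_left hN (by positivity)
      _ = ∑ k ∈ Finset.range N, x ^ (-α) * (L x / 2) *
            (((2:ℝ)^k) ^ α * (μ (Ioc ((2:ℝ)^k) ((2:ℝ)^(k+1)))).toReal) := by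
          rw [Finset.mul_sum]
      _ ≤ _ := Finset.sum_le_sum hterm
  -- combine
  have hkey : (μ {t : ℝ | t > x}).toReal * (2/ε)
      ≤ ((μ.prod μ) {p : ℝ × ℝ | p.1 * p.2 > x}).toReal := by
    refine le_trans (le_of_eq ?_) (hB.trans hA)
    rw [hFb]; ring
  rw [Real.dist_eq, sub_zero, abs_of_nonneg (by positivity)]
  rw [div_lt_iff₀ hF2pos]
  have h1 : ε * ((μ {t : ℝ | t > x}).toReal * (2/ε))
      ≤ ε * ((μ.prod μ) {p : ℝ × ℝ | p.1 * p.2 > x}).toReal :=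
    mul_le_mul_of_nonneg_left hkey hε.le
  have h2 : ε * ((μ {t : ℝ | t > x}).toReal * (2/ε)) = 2 * (μ {t : ℝ | t > x}).toReal := by
    field_simp
  linarith
end



section
variable (α : ℝ) (hα : 0 < α) (μ : Measure ℝ) [IsProbabilityMeasure μ]
    (L : ℝ → ℝ)
    (hnonneg : μ {t : ℝ | t < 0} = 0)
    (htail : ∀ x > (0 : ℝ), (μ {t : ℝ | t > x}).toReal = x ^ (-α) * L x)
    (hmoment : ∫⁻ x, ENNReal.ofReal (x ^ α) ∂μ = ⊤)

include hα hnonneg htail hmoment in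
lemma prod_upper (c T : ℝ) (hc : 0 < c) (hT : 0 < T)
    (hLc : ∀ u : ℝ, T ≤ u → L (c * u) ≤ 2 * L u) (y : ℝ) (hy : 0 < y) :
    (μ.prod μ) {p : ℝ × ℝ | p.1 * p.2 > c * y} ≤
      μ {t : ℝ | t > y / T} + ENNReal.ofReal (2 * c ^ (-α)) * (μ.prod μ) {p : ℝ × ℝ | p.1 * p.2 > y} := by
  have hLpos : ∀ u : ℝ, 0 < u → 0 < L u := by
    intro u hu
    have h := ENNReal.toReal_pos (tail_pos α hα μ hnonneg hmoment u).ne' (measure_ne_top μ _)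
    rw [htail u hu] at h
    have hup : 0 < u ^ (-α) := Real.rpow_pos_of_pos hu _
    nlinarith
  rw [prod_tail_eq μ (c * y), prod_tail_eq μ y]
  have hmeasg : Measurable (fun s : ℝ => μ {t : ℝ | s * t > y}) := by
    exact measurable_measure_prodMk_left (meas_prodset y)
  have hae : ∀ᵐ s ∂μ, μ {t : ℝ | s * t > c * y} ≤
      ({s : ℝ | s > y / T}.indicator (fun _ => 1) s
        + ENNReal.ofReal (2 * c ^ (-α)) * μ {t : ℝ | s * t > y}) := by
    filter_upwards [ae_nonneg' μ hnonneg] with s hs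
    by_cases hsT : s > y / T
    · rw [Set.indicator_of_mem (by exact hsT)]
      exact le_add_right prob_le_one
    · rw [Set.indicator_of_notMem (by exact hsT), zero_add]
      push_neg at hsT
      rcases hs.eq_or_lt with h0 | hs0
      · have : {t : ℝ | s * t > c * y} = ∅ := by
          ext t; simp [← h0, not_lt.2 (mul_pos hc hy).le]
        simp [this]
      · set u := y / s with hu
        have hu0 : 0 < u := div_pos hy hs0
        have hTu : T ≤ u := by
          rw [hu, le_div_iff₀ hs0]
          calc T * s ≤ T * (y / T) := by
                apply mul_le_mul_of_nonneg_left hsT hT.le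
            _ = y := by field_simp
        have hset1 : {t : ℝ | s * t > c * y} = {t : ℝ | t > c * u} := by
          ext t
          simp only [mem_setOf_eq, gt_iff_lt, hu]
          rw [mul_comm s t, ← mul_div_assoc, div_lt_iff₀ hs0]
        have hset2 : {t : ℝ | s * t > y} = {t : ℝ | t > u} := by
          ext t
          simp only [mem_setOf_eq, gt_iff_lt, hu]
          rw [mul_comm s t, div_lt_iff₀ hs0]
        rw [hset1, hset2]
        have hcu : 0 < c * u := mul_pos hc hu0
        have e1 : μ {t : ℝ | t > c * u} = ENNReal.ofReal ((c*u) ^ (-α) * L (c*u)) := by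
          rw [← htail _ hcu, ENNReal.ofReal_toReal (measure_ne_top μ _)]
        have e2 : μ {t : ℝ | t > u} = ENNReal.ofReal (u ^ (-α) * L u) := by
          rw [← htail _ hu0, ENNReal.ofReal_toReal (measure_ne_top μ _)]
        rw [e1, e2, ← ENNReal.ofReal_mul (by positivity)]
        apply ENNReal.ofReal_le_ofReal
        have hL2 : L (c * u) ≤ 2 * L u := hLc u hTu
        have hrp : (c*u) ^ (-α) = c ^ (-α) * u ^ (-α) := Real.mul_rpow hc.le hu0.le
        have hcp : (0:ℝ) < c ^ (-α) := Real.rpow_pos_of_pos hc _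
        have hup : (0:ℝ) < u ^ (-α) := Real.rpow_pos_of_pos hu0 _
        calc (c*u) ^ (-α) * L (c*u) = (c ^ (-α) * u ^ (-α)) * L (c*u) := by rw [hrp]
          _ ≤ (c ^ (-α) * u ^ (-α)) * (2 * L u) := by
              apply mul_le_mul_of_nonneg_left hL2 (by positivity)
          _ = 2 * c ^ (-α) * (u ^ (-α) * L u) := by ring
  calc ∫⁻ s, μ {t : ℝ | s * t > c * y} ∂μ
      ≤ ∫⁻ s, ({s : ℝ | s > y / T}.indicator (fun _ => 1) s
          + ENNReal.ofReal (2 * c ^ (-α)) * μ {t : ℝ | s * t > y}) ∂μ :=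
        lintegral_mono_ae hae
    _ = μ {s : ℝ | s > y / T} + ENNReal.ofReal (2 * c ^ (-α)) * ∫⁻ s, μ {t : ℝ | s * t > y} ∂μ := by
        have hIoi : {s : ℝ | s > y / T} = Ioi (y / T) := rfl
        rw [hIoi]
        rw [lintegral_add_left (measurable_const.indicator
            (measurableSet_Ioi : MeasurableSet {s : ℝ | s > y / T})),
          lintegral_indicator (measurableSet_Ioi : MeasurableSet {s : ℝ | s > y / T}),
          lintegral_const_mul _ hmeasg]
        simp
end


lemma aux_g_zero (g : ℝ → ℝ) (b : ℕ → ℝ)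
    (h : Filter.Tendsto (fun n : ℕ => (n:ℝ) * g (b n)) atTop (nhds 1)) :
    Filter.Tendsto (fun n : ℕ => g (b n)) atTop (nhds 0) := by
  have hinv : Filter.Tendsto (fun n : ℕ => ((n:ℝ))⁻¹) atTop (nhds 0) :=
    tendsto_inv_atTop_zero.comp tendsto_natCast_atTop_atTop
  have hmul := h.mul hinv
  rw [mul_zero] at hmul
  apply hmul.congr'
  filter_upwards [eventually_ge_atTop 1] with n hn
  have : (n:ℝ) ≠ 0 := Nat.cast_ne_zero.2 (by omega)
  field_simp

lemma aux_atTop (g : ℝ → ℝ) (hg : ∀ x y : ℝ, x ≤ y → g y ≤ g x)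
    (hgpos : ∀ x > (0:ℝ), 0 < g x) (b : ℕ → ℝ)
    (h : Filter.Tendsto (fun n : ℕ => (n:ℝ) * g (b n)) atTop (nhds 1)) :
    Filter.Tendsto b atTop atTop := by
  have hg0 := aux_g_zero g b h
  rw [tendsto_atTop]
  intro M
  have hM' : (0:ℝ) < max M 1 := lt_of_lt_of_le one_pos (le_max_right _ _)
  filter_upwards [hg0.eventually (eventually_lt_nhds (hgpos _ hM'))] with n hn
  by_contra h'
  push_neg at h'
  exact absurd (hg _ _ (h'.trans_le (le_max_left M 1)).le) (not_le.2 hn)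








section
variable (α : ℝ) (hα : 0 < α) (μ : Measure ℝ) [IsProbabilityMeasure μ]
    (L : ℝ → ℝ) (hL : SlowlyVarying L)
    (hnonneg : μ {t : ℝ | t < 0} = 0)
    (htail : ∀ x > (0 : ℝ), (μ {t : ℝ | t > x}).toReal = x ^ (-α) * L x)
    (hmoment : ∫⁻ x, ENNReal.ofReal (x ^ α) ∂μ = ⊤)

include hα hL hnonneg htail hmoment in
lemma part2 (a a2 : ℕ → ℝ) (ha : ∀ n, 0 < a n) (ha2 : ∀ n, 0 < a2 n)
    (h1 : Tendsto (fun n : ℕ =>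
        (n : ℝ) * (μ {t : ℝ | t > Real.sqrt (a n)}).toReal) atTop (nhds 1))
    (h2 : Tendsto (fun n : ℕ =>
        (n : ℝ) * ((μ.prod μ) {p : ℝ × ℝ | p.1 * p.2 > Real.sqrt (a2 n)}).toReal)
        atTop (nhds 1)) :
    Tendsto (fun n : ℕ => a n / a2 n) atTop (nhds 0) := by
  -- notation
  set Fb : ℝ → ℝ := fun x => (μ {t : ℝ | t > x}).toReal with hFbdef
  set F2 : ℝ → ℝ := fun x => ((μ.prod μ) {p : ℝ × ℝ | p.1 * p.2 > x}).toReal with hF2def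
  have hFbanti : ∀ x y : ℝ, x ≤ y → Fb y ≤ Fb x := fun x y hxy =>
    ENNReal.toReal_mono (measure_ne_top μ _) (measure_mono (fun t ht => lt_of_le_of_lt hxy ht))
  have hF2anti : ∀ x y : ℝ, x ≤ y → F2 y ≤ F2 x := fun x y hxy =>
    ENNReal.toReal_mono (measure_ne_top _ _)
      (measure_mono (fun p hp => lt_of_le_of_lt hxy hp))
  have hFbpos : ∀ x : ℝ, 0 < Fb x := fun x =>
    ENNReal.toReal_pos (tail_pos α hα μ hnonneg hmoment x).ne' (measure_ne_top μ _)
  have hF2pos : ∀ x > (0:ℝ), 0 < F2 x := by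
    intro x hx
    have h := prod_tail_ge_rect μ x 1 hx one_pos
    refine ENNReal.toReal_pos (fun h0 => ?_) (measure_ne_top _ _)
    rw [h0] at h
    exact absurd (le_antisymm h zero_le)
      (ENNReal.mul_pos (tail_pos α hα μ hnonneg hmoment _).ne'
        (tail_pos α hα μ hnonneg hmoment _).ne').ne'
  have hLpos : ∀ u : ℝ, 0 < u → 0 < L u := by
    intro u hu
    have h := hFbpos u
    rw [hFbdef] at h
    simp only at h
    rw [htail u hu] at h
    nlinarith [Real.rpow_pos_of_pos hu (-α)]
  -- b sequences
  set b : ℕ → ℝ := fun n => Real.sqrt (a n) with hbdef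
  set b2 : ℕ → ℝ := fun n => Real.sqrt (a2 n) with hb2def
  have hbpos : ∀ n, 0 < b n := fun n => Real.sqrt_pos.2 (ha n)
  have hb2pos : ∀ n, 0 < b2 n := fun n => Real.sqrt_pos.2 (ha2 n)
  have hbtop : Tendsto b atTop atTop := aux_atTop Fb hFbanti (fun x _ => hFbpos x) b h1
  have hb2top : Tendsto b2 atTop atTop := aux_atTop F2 hF2anti hF2pos b2 h2
  -- main estimate
  rw [Metric.tendsto_nhds]
  intro ε hε
  set c : ℝ := Real.sqrt ε with hcdef
  have hc : 0 < c := Real.sqrt_pos.2 hε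
  -- T from slow variation at c
  obtain ⟨T₀, hT₀⟩ := (eventually_atTop).1
    ((hL c hc).eventually (eventually_le_nhds (by norm_num : (1:ℝ) < 2)))
  set T : ℝ := max T₀ 1 with hTdef
  have hT : 0 < T := lt_of_lt_of_le one_pos (le_max_right _ _)
  have hLc : ∀ u : ℝ, T ≤ u → L (c * u) ≤ 2 * L u := by
    intro u hu
    have hu0 : 0 < u := lt_of_lt_of_le hT hu
    have h := hT₀ u (le_trans (le_max_left _ _) hu)
    rw [div_le_iff₀ (hLpos u hu0)] at h
    linarith
  set q : ℝ := (μ {t : ℝ | t > (1:ℝ)}).toReal with hqdef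
  have hq : 0 < q := hFbpos 1
  -- Fb ≤ F2 / q for x > 0 (real version)
  have hFbF2 : ∀ x : ℝ, 0 < x → Fb x * q ≤ F2 x := by
    intro x hx
    have h := prod_tail_ge_rect μ x 1 hx one_pos
    have hle := ENNReal.toReal_mono (measure_ne_top _ _) h
    rw [ENNReal.toReal_mul] at hle
    simpa [hFbdef, hF2def, hqdef, div_one] using hle
  set K : ℝ := 4 * T ^ α / q + 4 * c ^ (-α) + 1 with hKdef
  have hKpos : 0 < K := by
    have : (0:ℝ) < T ^ α := Real.rpow_pos_of_pos hT _
    have : (0:ℝ) < c ^ (-α) := Real.rpow_pos_of_pos hc _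
    positivity
  -- E1 : n * F2 (b2 n) ≤ 2
  have hE1 : ∀ᶠ n : ℕ in atTop, (n:ℝ) * F2 (b2 n) ≤ 2 :=
    h2.eventually (eventually_le_nhds (by norm_num : (1:ℝ) < 2))
  -- E2 : Fb (b2 n / T) ≤ 2 * T^α * Fb (b2 n)
  have hE2x : ∀ᶠ x : ℝ in atTop, Fb (x / T) ≤ 2 * T ^ α * Fb x := by
    have hsv := (hL T⁻¹ (by positivity)).eventually
      (eventually_le_nhds (by norm_num : (1:ℝ) < 2))
    filter_upwards [hsv, eventually_ge_atTop (1:ℝ)] with x hx hx1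
    have hx0 : (0:ℝ) < x := lt_of_lt_of_le one_pos hx1
    have hxT : 0 < x / T := div_pos hx0 hT
    have hLb : L (T⁻¹ * x) ≤ 2 * L x := by
      rw [div_le_iff₀ (hLpos x hx0)] at hx
      linarith
    have e1 : Fb (x / T) = (x / T) ^ (-α) * L (x / T) := htail _ hxT
    have e2 : Fb x = x ^ (-α) * L x := htail _ hx0
    rw [hFbdef] at e1 e2 ⊢
    simp only at e1 e2 ⊢
    rw [e1, e2]
    have hrp : (x / T) ^ (-α) = x ^ (-α) * T ^ α := by
      rw [Real.div_rpow hx0.le hT.le, Real.rpow_neg hT.le, div_eq_mul_inv, inv_inv]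
    have hxx : x / T = T⁻¹ * x := by rw [div_eq_mul_inv, mul_comm]
    rw [hrp, hxx]
    have h1p : (0:ℝ) < x ^ (-α) := Real.rpow_pos_of_pos hx0 _
    have h2p : (0:ℝ) < T ^ α := Real.rpow_pos_of_pos hT _
    calc x ^ (-α) * T ^ α * L (T⁻¹ * x) ≤ x ^ (-α) * T ^ α * (2 * L x) := by
          apply mul_le_mul_of_nonneg_left hLb (by positivity)
      _ = 2 * T ^ α * (x ^ (-α) * L x) := by ring
  have hE2 : ∀ᶠ n : ℕ in atTop, Fb (b2 n / T) ≤ 2 * T ^ α * Fb (b2 n) :=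
    hb2top.eventually hE2x
  -- E3 : K < n * F2 (b n)
  have hE3 : ∀ᶠ n : ℕ in atTop, K < (n:ℝ) * F2 (b n) := by
    have hrat := (ratio_tendsto_zero α hα μ L hL hnonneg htail hmoment).comp hbtop
    have hsmall : ∀ᶠ n : ℕ in atTop, Fb (b n) / F2 (b n) < 1 / (2 * (K + 1)) :=
      hrat.eventually (eventually_lt_nhds (by positivity))
    have hhalf : ∀ᶠ n : ℕ in atTop, (1:ℝ)/2 ≤ (n:ℝ) * Fb (b n) :=
      h1.eventually (eventually_ge_nhds (by norm_num : (1:ℝ)/2 < 1))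
    filter_upwards [hsmall, hhalf, hbtop.eventually (eventually_ge_atTop (1:ℝ))]
      with n hn1 hn2 hn3
    have hbn0 : (0:ℝ) < b n := hbpos n
    have hF2bn : 0 < F2 (b n) := hF2pos _ hbn0
    have hFbbn : 0 < Fb (b n) := hFbpos _
    -- from hn1 : Fb < F2 / (2(K+1))
    rw [div_lt_div_iff₀ hF2bn (by positivity)] at hn1
    -- Fb (b n) * (2 * (K+1)) < F2 (b n)
    have hn0 : (0:ℝ) ≤ (n:ℝ) := Nat.cast_nonneg n
    have step : (n:ℝ) * (Fb (b n) * (2 * (K+1))) ≤ (n:ℝ) * F2 (b n) := by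
      apply mul_le_mul_of_nonneg_left _ hn0
      nlinarith
    calc K < K + 1 := by linarith
      _ = 2 * (K+1) * (1/2) := by ring
      _ ≤ 2 * (K+1) * ((n:ℝ) * Fb (b n)) := by
          apply mul_le_mul_of_nonneg_left hn2 (by positivity)
      _ = (n:ℝ) * (Fb (b n) * (2 * (K+1))) := by ring
      _ ≤ (n:ℝ) * F2 (b n) := step
  -- E4 : n * F2 (c * b2 n) ≤ K - 1
  have hE4 : ∀ᶠ n : ℕ in atTop, (n:ℝ) * F2 (c * b2 n) ≤ K - 1 := by
    filter_upwards [hE1, hE2] with n hn1 hn2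
    have hb2n : 0 < b2 n := hb2pos n
    have hup := prod_upper α hα μ L hnonneg htail hmoment c T hc hT hLc (b2 n) hb2n
    have hupr : F2 (c * b2 n) ≤ Fb (b2 n / T) + 2 * c ^ (-α) * F2 (b2 n) := by
      have := ENNReal.toReal_mono (by
          exact ENNReal.add_ne_top.2 ⟨measure_ne_top _ _,
            ENNReal.mul_ne_top ENNReal.ofReal_ne_top (measure_ne_top _ _)⟩) hup
      rw [ENNReal.toReal_add (measure_ne_top _ _)
          (ENNReal.mul_ne_top ENNReal.ofReal_ne_top (measure_ne_top _ _)),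
        ENNReal.toReal_mul, ENNReal.toReal_ofReal (by positivity)] at this
      exact this
    have hn0 : (0:ℝ) ≤ (n:ℝ) := Nat.cast_nonneg n
    have hmul : (n:ℝ) * F2 (c * b2 n) ≤
        (n:ℝ) * Fb (b2 n / T) + 2 * c ^ (-α) * ((n:ℝ) * F2 (b2 n)) := by
      have := mul_le_mul_of_nonneg_left hupr hn0
      calc (n:ℝ) * F2 (c * b2 n) ≤ (n:ℝ) * (Fb (b2 n / T) + 2 * c ^ (-α) * F2 (b2 n)) := this
        _ = (n:ℝ) * Fb (b2 n / T) + 2 * c ^ (-α) * ((n:ℝ) * F2 (b2 n)) := by ring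
    have hterm1 : (n:ℝ) * Fb (b2 n / T) ≤ 4 * T ^ α / q := by
      have hstep : (n:ℝ) * Fb (b2 n / T) ≤ (n:ℝ) * (2 * T ^ α * Fb (b2 n)) :=
        mul_le_mul_of_nonneg_left hn2 hn0
      have hq2 : (n:ℝ) * Fb (b2 n) * q ≤ 2 := by
        calc (n:ℝ) * Fb (b2 n) * q = (n:ℝ) * (Fb (b2 n) * q) := by ring
          _ ≤ (n:ℝ) * F2 (b2 n) := mul_le_mul_of_nonneg_left (hFbF2 _ (hb2pos n)) hn0
          _ ≤ 2 := hn1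
      have hTα : (0:ℝ) < T ^ α := Real.rpow_pos_of_pos hT _
      have : (n:ℝ) * Fb (b2 n) ≤ 2 / q := by
        rw [le_div_iff₀ hq]; linarith
      calc (n:ℝ) * Fb (b2 n / T) ≤ (n:ℝ) * (2 * T ^ α * Fb (b2 n)) := hstep
        _ = 2 * T ^ α * ((n:ℝ) * Fb (b2 n)) := by ring
        _ ≤ 2 * T ^ α * (2 / q) := by
            apply mul_le_mul_of_nonneg_left this (by positivity)
        _ = 4 * T ^ α / q := by ring
    have hterm2 : 2 * c ^ (-α) * ((n:ℝ) * F2 (b2 n)) ≤ 4 * c ^ (-α) := by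
      have hcα : (0:ℝ) < c ^ (-α) := Real.rpow_pos_of_pos hc _
      calc 2 * c ^ (-α) * ((n:ℝ) * F2 (b2 n)) ≤ 2 * c ^ (-α) * 2 := by
            apply mul_le_mul_of_nonneg_left hn1 (by positivity)
        _ = 4 * c ^ (-α) := by ring
    rw [hKdef]
    calc (n:ℝ) * F2 (c * b2 n) ≤ (n:ℝ) * Fb (b2 n / T) + 2 * c ^ (-α) * ((n:ℝ) * F2 (b2 n)) := hmul
      _ ≤ 4 * T ^ α / q + 4 * c ^ (-α) := by linarith
      _ = 4 * T ^ α / q + 4 * c ^ (-α) + 1 - 1 := by ring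
  -- conclude
  filter_upwards [hE3, hE4, eventually_ge_atTop 1] with n hn3 hn4 hn1'
  have hnpos : (0:ℝ) < (n:ℝ) := by exact_mod_cast Nat.pos_of_ne_zero (by omega)
  have hlt : (n:ℝ) * F2 (c * b2 n) < (n:ℝ) * F2 (b n) := by linarith
  have hF2lt : F2 (c * b2 n) < F2 (b n) := lt_of_mul_lt_mul_left hlt hnpos.le
  have hblt : b n < c * b2 n := by
    by_contra hcon
    push_neg at hcon
    exact absurd (hF2anti _ _ hcon) (not_le.2 hF2lt)
  have han : a n < ε * a2 n := by
    have hb2n := hb2pos n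
    have hbn := hbpos n
    have hsq : (b n)^2 < (c * b2 n)^2 := by
      apply sq_lt_sq' _ hblt
      nlinarith
    have e1 : (b n)^2 = a n := Real.sq_sqrt (ha n).le
    have e2 : (c * b2 n)^2 = ε * a2 n := by
      rw [mul_pow, hcdef, hb2def]
      simp only
      rw [Real.sq_sqrt hε.le, Real.sq_sqrt (ha2 n).le]
    rw [e1, e2] at hsq
    exact hsq
  rw [Real.dist_eq, sub_zero, abs_of_nonneg (div_nonneg (ha n).le (ha2 n).le)]
  rw [div_lt_iff₀ (ha2 n)]
  linarith
end


theorem stmt10 (α : ℝ) (hα : 0 < α) (μ : Measure ℝ) [IsProbabilityMeasure μ]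
    (L : ℝ → ℝ) (hL : SlowlyVarying L)
    (hnonneg : μ {t : ℝ | t < 0} = 0)
    (htail : ∀ x > (0 : ℝ), (μ {t : ℝ | t > x}).toReal = x ^ (-α) * L x)
    (hmoment : ∫⁻ x, ENNReal.ofReal (x ^ α) ∂μ = ⊤) :
    Tendsto (fun x : ℝ =>
      (μ {t : ℝ | t > x}).toReal
        / ((μ.prod μ) {p : ℝ × ℝ | p.1 * p.2 > x}).toReal) atTop (nhds 0) ∧
    ∀ a a2 : ℕ → ℝ, (∀ n, 0 < a n) → (∀ n, 0 < a2 n) →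
      Tendsto (fun n : ℕ =>
        (n : ℝ) * (μ {t : ℝ | t > Real.sqrt (a n)}).toReal) atTop (nhds 1) →
      Tendsto (fun n : ℕ =>
        (n : ℝ) * ((μ.prod μ) {p : ℝ × ℝ | p.1 * p.2 > Real.sqrt (a2 n)}).toReal)
        atTop (nhds 1) →
      Tendsto (fun n : ℕ => a n / a2 n) atTop (nhds 0) := by
  refine ⟨ratio_tendsto_zero α hα μ L hL hnonneg htail hmoment, ?_⟩
  intro a a2 ha ha2 h1 h2
  exact part2 α hα μ L hL hnonneg htail hmoment a a2 ha ha2 h1 h2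
end
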